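/- arXiv:1904.07183 — 7 statements merged into one kernel-verified Lean document; each statement's English description precedes it below -/
import Mathlib

section
/- If G is a connected simple graph with at least three vertices such that |N(u) ∩ N(v)| ≥ 2 for every pair of vertices u, v at distance 2, then G is 2-connected. -/
open SimpleGraph

theorem stmt1 {V : Type*} (G : SimpleGraph V) (hconn : G.Connected)
    (hcard : 3 ≤ ENat.card V)
    (h2 : ∀ u v : V, G.dist u v = 2 →
      2 ≤ (G.neighborSet u ∩ G.neighborSet v).ncard) :
    ∀ v : V, ((⊤ : G.Subgraph).deleteVerts {v}).coe.Connected := by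
  intro v
  set H := ((⊤ : G.Subgraph).deleteVerts ({v} : Set V)) with hH
  have hmem : ∀ x : V, x ≠ v → x ∈ H.verts := by
    intro x hx
    simp [hH, hx]
  have hadj : ∀ (a b : V) (ha : a ≠ v) (hb : b ≠ v), G.Adj a b →
      H.coe.Adj ⟨a, hmem a ha⟩ ⟨b, hmem b hb⟩ := by
    intro a b ha hb hab
    simp [hH, SimpleGraph.Subgraph.deleteVerts_adj, ha, hb, hab]
  -- connect two non-v vertices at distance ≤ 2 (via possibly v)
  have step : ∀ (a d : V) (ha : a ≠ v) (hd : d ≠ v), G.Adj a v → G.Adj v d →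
      H.coe.Reachable ⟨a, hmem a ha⟩ ⟨d, hmem d hd⟩ := by
    intro a d ha hd hav hvd
    by_cases had : a = d
    · subst had; rfl
    by_cases hadj' : G.Adj a d
    · exact (hadj a d ha hd hadj').reachable
    have hdist : G.dist a d = 2 := by
      have hle : G.dist a d ≤ 2 := by
        have := SimpleGraph.dist_le (SimpleGraph.Walk.cons hav
          (SimpleGraph.Walk.cons hvd SimpleGraph.Walk.nil))
        simpa using this
      have h0 : G.dist a d ≠ 0 := by
        intro h
        have : a = d := by
          have hr : G.Reachable a d := hconn a d
          exact (SimpleGraph.Reachable.dist_eq_zero_iff hr).mp h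
        exact had this
      have h1 : G.dist a d ≠ 1 := by
        intro h
        exact hadj' (SimpleGraph.dist_eq_one_iff_adj.mp h)
      omega
    have hcard2 := h2 a d hdist
    have : ∃ w ∈ G.neighborSet a ∩ G.neighborSet d, w ≠ v := by
      by_contra hcon
      push_neg at hcon
      have hsub : (G.neighborSet a ∩ G.neighborSet d) ⊆ {v} := by
        intro w hw; exact hcon w hw
      have := Set.ncard_le_ncard hsub (Set.finite_singleton v)
      simp [Set.ncard_singleton] at this
      omega
    obtain ⟨w, hw, hwv⟩ := this
    obtain ⟨hw1, hw2⟩ := hw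
    exact ((hadj a w ha hwv hw1).reachable).trans
      ((hadj w d hwv hd (G.adj_symm hw2)).reachable)
  have key : ∀ (n : ℕ) (a b : V) (ha : a ≠ v) (hb : b ≠ v) (p : G.Walk a b),
      p.length ≤ n → H.coe.Reachable ⟨a, hmem a ha⟩ ⟨b, hmem b hb⟩ := by
    intro n
    induction n with
    | zero =>
      intro a b ha hb p hp
      have : a = b := p.eq_of_length_eq_zero (Nat.le_zero.mp hp)
      subst this
      rfl
    | succ n ih =>
      intro a b ha hb p hp
      cases p with
      | nil => rfl
      | @cons _ c _ h q =>
        by_cases hc : c = v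
        · cases q with
          | nil => exact absurd hc hb
          | @cons _ d _ h' q' =>
            have h'' : G.Adj v d := hc ▸ h'
            have hd : d ≠ v := fun hdv => G.ne_of_adj h'' hdv.symm
            have h1 : H.coe.Reachable ⟨a, hmem a ha⟩ ⟨d, hmem d hd⟩ :=
              step a d ha hd (hc ▸ h) h''
            have hlen : q'.length ≤ n := by
              simp [SimpleGraph.Walk.length_cons] at hp
              omega
            exact h1.trans (ih d b hd hb q' hlen)
        · have hlen : q.length ≤ n := by
            simp [SimpleGraph.Walk.length_cons] at hp
            omega
          exact ((hadj a c ha hc h).reachable).trans (ih c b hc hb q hlen)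
  rw [SimpleGraph.connected_iff]
  constructor
  · rintro ⟨a, haV⟩ ⟨b, hbV⟩
    have ha : a ≠ v := by
      simp [hH] at haV; exact haV
    have hb : b ≠ v := by
      simp [hH] at hbV; exact hbV
    have p := (hconn a b).some
    exact key p.length a b ha hb p le_rfl
  · have : Nontrivial V := by
      rw [← ENat.one_lt_card_iff_nontrivial]
      exact lt_of_lt_of_le (by norm_num) hcard
    obtain ⟨x, hx⟩ := exists_ne v
    exact ⟨⟨x, hmem x hx⟩⟩
end

section
/- Let G be a bipartite L1-graph and let u and v be adjacent vertices in G. Then |d(u) − d(v)| ≤ 1. -/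
open SimpleGraph

/-- `G` is an `L₁`-graph: `d(u) + d(v) ≥ |N(u) ∪ N(v) ∪ N(w)| - 1` for every
triple `u, v, w` with `d(u,v) = 2` and `w` a common neighbor of `u` and `v`. -/
def IsL1Graph {V : Type*} (G : SimpleGraph V) : Prop :=
  ∀ u v w : V, G.dist u v = 2 → G.Adj u w → G.Adj v w →
    (G.neighborSet u ∪ G.neighborSet v ∪ G.neighborSet w).ncard - 1 ≤
      (G.neighborSet u).ncard + (G.neighborSet v).ncard

private lemma no_triangle {V : Type*} {G : SimpleGraph V} (hbip : G.Colorable 2)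
    {a b c : V} (hab : G.Adj a b) (hbc : G.Adj b c) (hac : G.Adj a c) : False := by
  obtain ⟨C⟩ := hbip
  have h1 := C.valid hab
  have h2 := C.valid hbc
  have h3 := C.valid hac
  have v1 : (C a).val ≠ (C b).val := fun h => h1 (Fin.ext h)
  have v2 : (C b).val ≠ (C c).val := fun h => h2 (Fin.ext h)
  have v3 : (C a).val ≠ (C c).val := fun h => h3 (Fin.ext h)
  have := (C a).isLt; have := (C b).isLt; have := (C c).isLt
  omega

private lemma nbr_disjoint {V : Type*} {G : SimpleGraph V} (hbip : G.Colorable 2)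
    {a b : V} (hab : G.Adj a b) : Disjoint (G.neighborSet a) (G.neighborSet b) := by
  rw [Set.disjoint_left]
  intro y hya hyb
  exact no_triangle hbip hab hyb hya

private lemma key {V : Type*} {G : SimpleGraph V}
    (hlf : ∀ x : V, (G.neighborSet x).Finite)
    (hbip : G.Colorable 2) (hL1 : IsL1Graph G)
    (u v : V) (huv : G.Adj u v) :
    (G.neighborSet u).ncard ≤ (G.neighborSet v).ncard + 1 := by
  by_contra hcon
  push_neg at hcon
  have hvmem : u ∈ G.neighborSet v := huv.symm
  have hvpos : 0 < (G.neighborSet v).ncard :=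
    (Set.ncard_pos (hlf v)).2 ⟨u, hvmem⟩
  have humem : v ∈ G.neighborSet u := huv
  have hupos : 0 < (G.neighborSet u).ncard :=
    (Set.ncard_pos (hlf u)).2 ⟨v, humem⟩
  have h2 : 1 < (G.neighborSet u).ncard := by omega
  obtain ⟨x, hxu, hxv⟩ := Set.exists_ne_of_one_lt_ncard h2 v
  have hux : G.Adj u x := hxu
  -- v and x are not adjacent
  have hnadj : ¬ G.Adj v x := fun h => no_triangle hbip huv h hux
  -- dist v x = 2
  have hle : G.dist v x ≤ 2 := by
    simpa using SimpleGraph.dist_le (Walk.cons huv.symm (Walk.cons hux Walk.nil))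
  have hreach : G.Reachable v x := ⟨Walk.cons huv.symm (Walk.cons hux Walk.nil)⟩
  have hne0 : G.dist v x ≠ 0 := by
    intro h
    exact hxv ((hreach.dist_eq_zero_iff).1 h).symm
  have hne1 : G.dist v x ≠ 1 := by
    intro h
    exact hnadj ((SimpleGraph.dist_eq_one_iff_adj).1 h)
  have hdist : G.dist v x = 2 := by omega
  have hL := hL1 v x u hdist huv.symm hux.symm
  -- disjointness
  have hd1 := nbr_disjoint hbip huv
  have hd2 := nbr_disjoint hbip hux
  have hdisj : Disjoint (G.neighborSet v ∪ G.neighborSet x) (G.neighborSet u) :=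
    Set.disjoint_union_left.2 ⟨hd1.symm, hd2.symm⟩
  have hcard : (G.neighborSet v ∪ G.neighborSet x ∪ G.neighborSet u).ncard
      = (G.neighborSet v ∪ G.neighborSet x).ncard + (G.neighborSet u).ncard :=
    Set.ncard_union_eq hdisj ((hlf v).union (hlf x)) (hlf u)
  have hsub : (G.neighborSet x).ncard ≤ (G.neighborSet v ∪ G.neighborSet x).ncard :=
    Set.ncard_le_ncard (Set.subset_union_right) ((hlf v).union (hlf x))
  omega

theorem stmt2 {V : Type*} (G : SimpleGraph V)
    (hlf : ∀ x : V, (G.neighborSet x).Finite)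
    (hbip : G.Colorable 2) (hL1 : IsL1Graph G)
    (u v : V) (huv : G.Adj u v) :
    |((G.neighborSet u).ncard : ℤ) - ((G.neighborSet v).ncard : ℤ)| ≤ 1 := by
  have h1 := key hlf hbip hL1 u v huv
  have h2 := key hlf hbip hL1 v u huv.symm
  rw [abs_le]
  constructor <;> omega
end

section
/- In a claw-free graph G, for every triple of vertices u, w, v with d(u,v) = 2 and w ∈ N(u) ∩ N(v), the inequality d(u) + d(v) ≥ |N(u) ∪ N(v) ∪ N(w)| holds if and only if |N(u) ∩ N(v)| ≥ 2. -/
open SimpleGraph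

/-- A graph is claw-free if it has no induced subgraph isomorphic to `K_{1,3}`. -/
def ClawFree {V : Type*} (G : SimpleGraph V) : Prop :=
  IsEmpty (completeBipartiteGraph (Fin 1) (Fin 3) ↪g G)

lemma claw_aux {V : Type*} {G : SimpleGraph V} (hclaw : ClawFree G)
    {w a b c : V} (ha : G.Adj w a) (hb : G.Adj w b) (hc : G.Adj w c)
    (hab : a ≠ b) (hac : a ≠ c) (hbc : b ≠ c)
    (nab : ¬ G.Adj a b) (nac : ¬ G.Adj a c) (nbc : ¬ G.Adj b c) : False := by
  apply hclaw.false
  refine ⟨⟨fun x => Sum.elim (fun _ => w) (![a,b,c]) x, ?_⟩, ?_⟩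
  · rintro (i | i) (j | j) hij
    · simp [Subsingleton.elim i j]
    · exfalso
      fin_cases j <;> simp_all <;>
        first
          | exact ha.ne hij | exact hb.ne hij | exact hc.ne hij
    · exfalso
      fin_cases i <;> simp_all <;>
        first
          | exact ha.ne hij.symm | exact hb.ne hij.symm | exact hc.ne hij.symm
    · fin_cases i <;> fin_cases j <;> simp_all
  · rintro (i | i) (j | j)
    · simp; exact fun h => G.irrefl h
    · fin_cases j <;> simpa using (by first | exact ha | exact hb | exact hc)
    · fin_cases i <;> simpa using (by first | exact ha.symm | exact hb.symm | exact hc.symm)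
    · fin_cases i <;> fin_cases j <;> simp_all <;>
        first
          | exact fun h => nab h.symm | exact fun h => nac h.symm
          | exact fun h => nbc h.symm | exact fun h => nab h | exact fun h => nac h | exact fun h => nbc h

theorem stmt5 {V : Type*} (G : SimpleGraph V)
    (hlf : ∀ x : V, (G.neighborSet x).Finite)
    (hclaw : ClawFree G)
    (u w v : V) (hdist : G.dist u v = 2) (hu : G.Adj u w) (hv : G.Adj v w) :
    (G.neighborSet u ∪ G.neighborSet v ∪ G.neighborSet w).ncard ≤
      (G.neighborSet u).ncard + (G.neighborSet v).ncard ↔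
    2 ≤ (G.neighborSet u ∩ G.neighborSet v).ncard := by
  have huv : u ≠ v := by
    rintro rfl
    simp [SimpleGraph.dist_self] at hdist
  have hnadj : ¬ G.Adj u v := by
    intro h
    have := SimpleGraph.dist_le h.toWalk
    simp [hdist] at this
  -- N(w) ⊆ N(u) ∪ N(v) ∪ {u, v}
  have hsub : G.neighborSet w ⊆ (G.neighborSet u ∪ G.neighborSet v) ∪ {u, v} := by
    intro x hx
    by_cases hxu : x = u
    · subst hxu; right; simp
    by_cases hxv : x = v
    · subst hxv; right; simp
    by_contra hcon
    simp only [Set.mem_union, Set.mem_insert_iff, Set.mem_singleton_iff,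
      SimpleGraph.mem_neighborSet, not_or] at hcon
    exact claw_aux hclaw hu.symm hv.symm hx huv (Ne.symm hxu) (Ne.symm hxv)
      hnadj hcon.1.1 hcon.1.2
  have hueq : G.neighborSet u ∪ G.neighborSet v ∪ G.neighborSet w
      = (G.neighborSet u ∪ G.neighborSet v) ∪ {u, v} := by
    apply Set.Subset.antisymm
    · rw [Set.union_assoc]
      intro x hx
      rcases hx with hx | hx
      · exact Or.inl (Or.inl hx)
      rcases hx with hx | hx
      · exact Or.inl (Or.inr hx)
      · exact hsub hx
    · rintro x (hx | hx)
      · exact Or.inl hx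
      · rcases hx with rfl | rfl
        · exact Or.inr hu.symm
        · exact Or.inr hv.symm
  have hdisj : Disjoint (G.neighborSet u ∪ G.neighborSet v) {u, v} := by
    rw [Set.disjoint_right]
    rintro x (rfl | rfl) hx <;>
      rcases hx with hx | hx <;>
      simp only [SimpleGraph.mem_neighborSet] at hx
    · exact G.irrefl hx
    · exact hnadj (G.adj_symm hx)
    · exact hnadj hx
    · exact G.irrefl hx
  have hfin : (G.neighborSet u ∪ G.neighborSet v).Finite := (hlf u).union (hlf v)
  have hcard2 : ({u, v} : Set V).ncard = 2 := by
    rw [Set.ncard_pair huv]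
  have hcardU : (G.neighborSet u ∪ G.neighborSet v ∪ G.neighborSet w).ncard
      = (G.neighborSet u ∪ G.neighborSet v).ncard + 2 := by
    rw [hueq, Set.ncard_union_eq hdisj hfin ((Set.finite_singleton v).insert u),
      hcard2]
  have hie : (G.neighborSet u ∪ G.neighborSet v).ncard
      + (G.neighborSet u ∩ G.neighborSet v).ncard
      = (G.neighborSet u).ncard + (G.neighborSet v).ncard := by
    exact Set.ncard_union_add_ncard_inter _ _ (hlf u) (hlf v)
  omega
end

section
/- Every claw-free graph is an L1-graph. -/
open SimpleGraph

theorem stmt6 {V : Type*} (G : SimpleGraph V)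
    (hlf : ∀ x : V, (G.neighborSet x).Finite)
    (hclaw : ClawFree G) : IsL1Graph G := by
  intro u v w hdist huw hvw
  have hne : u ≠ v := by
    intro h; rw [h, SimpleGraph.dist_self] at hdist; omega
  have hnadj : ¬ G.Adj u v := by
    intro h
    have := G.dist_le h.toWalk
    simp [SimpleGraph.Walk.length_cons] at this
    omega
  -- key: every neighbor of w is in N(u) ∪ N(v) ∪ {u, v}
  have key : G.neighborSet w ⊆ G.neighborSet u ∪ G.neighborSet v ∪ {u, v} := by
    intro x hx
    by_contra hxn
    simp only [Set.mem_union, Set.mem_insert_iff, Set.mem_singleton_iff,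
      SimpleGraph.mem_neighborSet] at hxn hx
    have hxu : ¬ G.Adj u x := fun h => hxn (Or.inl (Or.inl h))
    have hxv : ¬ G.Adj v x := fun h => hxn (Or.inl (Or.inr h))
    have hxne : x ≠ u ∧ x ≠ v := by
      constructor <;> intro h <;> exact hxn (Or.inr (by simp [h]))
    have hwx : G.Adj w x := hx
    -- build a claw embedding
    let f : Fin 1 ⊕ Fin 3 → V := Sum.elim (fun _ => w) ![u, v, x]
    refine hclaw.false (⟨⟨f, ?_⟩, ?_⟩ : completeBipartiteGraph (Fin 1) (Fin 3) ↪g G)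
    · rintro (a | a) (b | b) hab
      · simp [Subsingleton.elim a b]
      · exfalso
        fin_cases b <;>
          first
            | exact huw.ne' hab
            | exact hvw.ne' hab
            | exact hwx.ne hab
      · exfalso
        fin_cases a <;>
          first
            | exact huw.ne hab
            | exact hvw.ne hab
            | exact hwx.ne' hab
      · fin_cases a <;> fin_cases b <;>
          first
            | rfl
            | exact absurd hab hne
            | exact absurd hab.symm hne
            | exact absurd hab hxne.1
            | exact absurd hab.symm hxne.1
            | exact absurd hab hxne.2
            | exact absurd hab.symm hxne.2
    · rintro (a | a) (b | b)
      · simp [f, Subsingleton.elim a b]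
      · fin_cases a <;> fin_cases b <;>
          simp [f, huw.symm, hvw.symm, hwx, Matrix.cons_val] <;>
          first | exact huw.symm | exact hvw.symm | exact hwx
      · fin_cases a <;> fin_cases b <;>
          simp [f, huw, hvw, hwx.symm, Matrix.cons_val] <;>
          first | exact huw | exact hvw | exact hwx.symm
      · fin_cases a <;> fin_cases b <;>
          simp [f, hnadj, hxu, hxv, G.irrefl, Matrix.cons_val] <;>
          first
            | exact fun h => hnadj h.symm
            | exact fun h => hxu h.symm
            | exact fun h => hxv h.symm
            | exact hnadj
            | exact hxu
            | exact hxv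
  have hA := hlf u
  have hB := hlf v
  have hW := hlf w
  have hsub : G.neighborSet u ∪ G.neighborSet v ∪ G.neighborSet w ⊆
      (G.neighborSet u ∪ G.neighborSet v) ∪ {u, v} := by
    intro x hx
    rcases hx with (h | h) | h
    · exact Or.inl (Or.inl h)
    · exact Or.inl (Or.inr h)
    · exact key h
  have h1 : (G.neighborSet u ∪ G.neighborSet v ∪ G.neighborSet w).ncard ≤
      ((G.neighborSet u ∪ G.neighborSet v) ∪ {u, v}).ncard :=
    Set.ncard_le_ncard hsub ((hA.union hB).union ((Set.finite_singleton v).insert u))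
  have h2 : ((G.neighborSet u ∪ G.neighborSet v) ∪ ({u, v} : Set V)).ncard ≤
      (G.neighborSet u ∪ G.neighborSet v).ncard + 2 := by
    have huv : ({u, v} : Set V).ncard ≤ 2 := by
      have := Set.ncard_insert_le u ({v} : Set V)
      simpa using this
    have := Set.ncard_union_le (G.neighborSet u ∪ G.neighborSet v) ({u, v} : Set V)
    omega
  have h3 : (G.neighborSet u ∪ G.neighborSet v).ncard +
      (G.neighborSet u ∩ G.neighborSet v).ncard =
      (G.neighborSet u).ncard + (G.neighborSet v).ncard :=
    Set.ncard_union_add_ncard_inter _ _ hA hB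
  have h4 : 1 ≤ (G.neighborSet u ∩ G.neighborSet v).ncard := by
    have hne' : (G.neighborSet u ∩ G.neighborSet v).Nonempty := ⟨w, huw, hvw⟩
    have := hne'.ncard_pos (hA.inter_of_left _)
    omega
  omega
end

section
/- Every graph in the family K = { G : K_{p,p+1} ⊆ G ⊆ K_p ∨ \overline{K_{p+1}} for some p ≥ 2 } contains, for every cycle C of length n < |V(G)| − 1, a cycle of length n+1 or n+2 containing all vertices of C. -/
open SimpleGraph

/-- The join `K_p ∨ \overline{K_{p+1}}`. -/
def KpJoinEmpty (p : ℕ) : SimpleGraph (Fin p ⊕ Fin (p + 1)) where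
  Adj x y := x ≠ y ∧ (x.isLeft ∨ y.isLeft)
  symm := ⟨by rintro x y ⟨h1, h2⟩; exact ⟨h1.symm, h2.symm⟩⟩
  loopless := ⟨by rintro x ⟨h1, _⟩; exact h1 rfl⟩

namespace Stmt10Aux

variable {V : Type*}

/-- Linear chain bound. -/
lemma lin (P : V → Bool) : ∀ (l : List V),
    List.Chain' (fun x y => ¬(P x ∧ P y)) l → 2 * l.countP P ≤ l.length + 1
  | [], _ => by simp
  | [x], _ => by cases hx : P x <;> simp [List.countP_cons, hx]
  | x :: y :: l, h => by
    unfold List.Chain' at h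
    rw [List.isChain_cons_cons] at h
    have h1 := h.1
    have h2 := h.2.tail
    have ih := lin P l h2
    cases hx : P x <;> cases hy : P y <;>
      simp [List.countP_cons, hx, hy] at h1 ⊢ <;> omega

/-- Linear chain bound when the last element fails `P`. -/
lemma lin2 (P : V → Bool) : ∀ (l : List V),
    List.Chain' (fun x y => ¬(P x ∧ P y)) l →
    (∀ x ∈ l.getLast?, P x = false) → 2 * l.countP P ≤ l.length
  | [], _, _ => by simp
  | [x], _, hl => by
    have := hl x (by simp)
    simp [List.countP_cons, this]
  | x :: y :: l, h, hl => by
    unfold List.Chain' at h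
    rw [List.isChain_cons_cons] at h
    have h1 := h.1
    have h2 := h.2.tail
    rcases l with _ | ⟨z, l⟩
    · have := hl y (by simp)
      cases hx : P x <;> simp [List.countP_cons, hx, this] at h1 ⊢
    · have ih := lin2 P (z :: l) h2 (by
        intro w hw
        exact hl w (by simpa using hw))
      cases hx : P x <;> cases hy : P y <;>
        simp [List.countP_cons, hx, hy] at h1 ih ⊢ <;> omega

/-- Cyclic chain bound: if `x :: (s ++ [x])` has no two consecutive elements
satisfying `P`, then at most half of the cyclic list `x :: s` satisfies `P`. -/
lemma cyc (P : V → Bool) (x : V) (s : List V)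
    (h : List.Chain' (fun a b => ¬(P a ∧ P b)) (x :: (s ++ [x]))) :
    2 * (x :: s).countP P ≤ s.length + 1 := by
  cases hx : P x
  · have h2 : List.Chain' (fun a b => ¬(P a ∧ P b)) s := by
      have := h.tail
      simp only [List.tail_cons] at this
      rw [List.isChain_append] at this
      exact this.1
    have := lin P s h2
    simp [List.countP_cons, hx]
    omega
  · rcases s with _ | ⟨w, s⟩
    · exfalso
      have := List.isChain_cons_cons.mp h
      simp [hx] at this
    · have h1 : ¬(P x ∧ P w) := by
        have := List.isChain_cons_cons.mp h
        simpa using this.1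
      have hw : P w = false := by
        cases hw : P w
        · rfl
        · exact absurd ⟨hx, hw⟩ h1
      have h2 := (List.isChain_cons_cons.mp h).2
      have h3 : List.Chain' (fun a b => ¬(P a ∧ P b)) (s ++ [x]) := by
        have := h2.tail
        simpa [List.Chain'] using this
      unfold List.Chain' at h3
      rw [List.isChain_append] at h3
      have hs : List.Chain' (fun a b => ¬(P a ∧ P b)) s := h3.1
      have hlast : ∀ z ∈ s.getLast?, P z = false := by
        intro z hz
        have := h3.2.2 z hz x (by simp)
        cases hzp : P z
        · rfl
        · exact absurd ⟨hzp, hx⟩ this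
      have := lin2 P s hs hlast
      simp [List.countP_cons, hx, hw]
      omega

variable {G : SimpleGraph V}

lemma supp_concat {u v : V} (p : G.Walk u v) : ∃ s, p.support = s ++ [v] := by
  induction p with
  | nil => exact ⟨[], rfl⟩
  | @cons u' v' w' h q ih =>
    obtain ⟨s, hs⟩ := ih
    exact ⟨u' :: s, by rw [Walk.support_cons, hs]; rfl⟩

lemma chain'_support (R : V → V → Prop) :
    ∀ {u v : V} (p : G.Walk u v), (∀ d ∈ p.darts, R d.fst d.snd) →
      List.Chain' R p.support
  | _, _, Walk.nil, _ => by simp [List.Chain', List.isChain_singleton]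
  | u, v, Walk.cons h q, hd => by
    rw [Walk.support_cons, q.support_eq_cons]
    refine List.IsChain.cons_cons ?_ ?_
    · exact hd ⟨(_, _), h⟩ (by simp [Walk.darts_cons])
    · rw [← q.support_eq_cons]
      exact chain'_support R q fun d hdm => hd d (by simp [Walk.darts_cons, hdm])

lemma split_at_dart : ∀ {u v : V} (p : G.Walk u v) (d : G.Dart), d ∈ p.darts →
    ∃ (q : G.Walk u d.fst) (r : G.Walk d.snd v), p = q.append (Walk.cons d.adj r)
  | _, _, Walk.nil, d, hd => by simp at hd
  | u, v, Walk.cons h q, d, hd => by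
    rw [Walk.darts_cons, List.mem_cons] at hd
    rcases hd with rfl | hd
    · exact ⟨Walk.nil, q, rfl⟩
    · obtain ⟨q', r', hqr⟩ := split_at_dart q d hd
      exact ⟨Walk.cons h q', r', by rw [hqr]; rfl⟩

lemma rotate_cycle {a u : V} (q : G.Walk a u) (r : G.Walk u a)
    (h : (q.append r).IsCycle) : (r.append q).IsCycle := by
  rw [Walk.isCycle_def] at h ⊢
  obtain ⟨ht, hne, hnodup⟩ := h
  refine ⟨?_, ?_, ?_⟩
  · rw [Walk.isTrail_def, Walk.edges_append] at ht ⊢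
    exact List.perm_append_comm.nodup ht
  · intro hcon
    have h1 : (r.append q).length = 0 := by rw [hcon]; rfl
    have h2 : (q.append r).length ≠ 0 := by
      intro h0
      exact hne (Walk.nil_iff_eq_nil.mp (Walk.length_eq_zero_iff.mp h0))
    rw [Walk.length_append] at h1 h2
    omega
  · rw [Walk.tail_support_append] at hnodup ⊢
    exact List.perm_append_comm.nodup hnodup

end Stmt10Aux

open Stmt10Aux

theorem stmt10 (p : ℕ) (hp : 2 ≤ p) (G : SimpleGraph (Fin p ⊕ Fin (p + 1)))
    (hlow : completeBipartiteGraph (Fin p) (Fin (p + 1)) ≤ G)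
    (hhigh : G ≤ KpJoinEmpty p)
    (a : Fin p ⊕ Fin (p + 1)) (C : G.Walk a a) (hC : C.IsCycle)
    (hn : C.length < (2 * p + 1) - 1) :
    ∃ (b : Fin p ⊕ Fin (p + 1)) (C' : G.Walk b b), C'.IsCycle ∧
      (C'.length = C.length + 1 ∨ C'.length = C.length + 2) ∧
      ∀ x ∈ C.support, x ∈ C'.support := by
  classical
  -- decompose C as a first edge plus the rest
  have hnn : ¬ C.Nil := hC.not_nil
  rw [Walk.not_nil_iff] at hnn
  obtain ⟨c, hac, Q, hCeq⟩ := hnn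
  -- support shape
  obtain ⟨s, hsQ⟩ := supp_concat Q
  have hsupp : C.support = a :: (s ++ [a]) := by rw [hCeq, Walk.support_cons, hsQ]
  have hslen : s.length + 1 = C.length := by
    have h1 : Q.support.length = Q.length + 1 := Walk.length_support Q
    have h2 : Q.support.length = s.length + 1 := by rw [hsQ]; simp
    have h3 : C.length = Q.length + 1 := by rw [hCeq]; simp
    omega
  have hmem : ∀ x ∈ C.support, x ∈ (a :: s) := by
    intro x hx
    rw [hsupp] at hx
    simp at hx ⊢
    tauto
  -- generic counting principle
  have hcount : ∀ (P : (Fin p ⊕ Fin (p+1)) → Bool),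
      (∀ d ∈ C.darts, ¬(P d.fst ∧ P d.snd)) →
      2 * (a :: s).countP P ≤ C.length := by
    intro P hP
    have hch := chain'_support (fun x y => ¬(P x ∧ P y)) C hP
    rw [hsupp] at hch
    have := cyc P a s hch
    omega
  -- cardinality helper
  have hcard : ∀ {α : Type} [Fintype α] (f : α → (Fin p ⊕ Fin (p+1)))
      (hf : Function.Injective f) (P : (Fin p ⊕ Fin (p+1)) → Bool)
      (hfP : ∀ x, P (f x) = true)
      (hall : ∀ x, f x ∈ C.support),
      Fintype.card α ≤ (a :: s).countP P := by
    intro α _ f hf P hfP hall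
    calc Fintype.card α = (Finset.univ : Finset α).card := rfl
      _ ≤ ((a :: s).filter P).toFinset.card := by
          apply Finset.card_le_card_of_injOn f
          · intro x _
            rw [Finset.mem_coe, List.mem_toFinset, List.mem_filter]
            exact ⟨hmem _ (hall x), hfP x⟩
          · exact hf.injOn
      _ ≤ ((a :: s).filter P).length := (List.filter P (a :: s)).toFinset_card_le
      _ = (a :: s).countP P := List.countP_eq_length_filter.symm
  -- there is always a "right" vertex outside C
  have hR : ∃ j : Fin (p+1), Sum.inr j ∉ C.support := by
    by_contra hcon
    push_neg at hcon
    have hnoRR : ∀ d ∈ C.darts, ¬(d.fst.isRight ∧ d.snd.isRight) := by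
      intro d _
      have hadj := hhigh d.adj
      rcases hadj with ⟨_, h | h⟩ <;> rintro ⟨h1, h2⟩
      · cases hf : d.fst <;> simp [hf] at h h1
      · cases hf : d.snd <;> simp [hf] at h h2
    have h1 := hcount (fun x => x.isRight) hnoRR
    have h2 := hcard Sum.inr (fun _ _ h => by injection h) (fun x => x.isRight)
      (fun x => rfl) hcon
    simp [Fintype.card_fin] at h2
    omega
  by_cases hLL : ∃ d ∈ C.darts, d.fst.isLeft ∧ d.snd.isLeft
  · -- insert one right vertex into a left-left edge
    obtain ⟨d, hd, hdl, hdr⟩ := hLL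
    obtain ⟨q, r, hsplit⟩ := split_at_dart C d hd
    obtain ⟨j, hj⟩ := hR
    have hC2 : (Walk.cons d.adj (r.append q)).IsCycle := by
      have := rotate_cycle q (Walk.cons d.adj r) (hsplit ▸ hC)
      rwa [Walk.cons_append] at this
    rw [Walk.cons_isCycle_iff] at hC2
    obtain ⟨hpath, hedge⟩ := hC2
    obtain ⟨i₁, hfst⟩ : ∃ i, d.fst = Sum.inl i := by
      cases hf : d.fst
      · exact ⟨_, rfl⟩
      · simp [hf] at hdl
    obtain ⟨i₂, hsnd⟩ : ∃ i, d.snd = Sum.inl i := by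
      cases hf : d.snd
      · exact ⟨_, rfl⟩
      · simp [hf] at hdr
    have hay : G.Adj d.fst (Sum.inr j) := hlow (by rw [hfst]; simp)
    have hyb : G.Adj (Sum.inr j) d.snd := hlow (by rw [hsnd]; simp)
    have hymem : Sum.inr j ∉ (r.append q).support := by
      intro hmem'
      apply hj
      rw [hsplit, Walk.mem_support_append_iff]
      rw [Walk.mem_support_append_iff] at hmem'
      rcases hmem' with h | h
      · exact Or.inr (by rw [Walk.support_cons]; exact List.mem_cons_of_mem _ h)
      · exact Or.inl h
    refine ⟨d.fst, Walk.cons hay (Walk.cons hyb (r.append q)), ?_, ?_, ?_⟩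
    · rw [Walk.cons_isCycle_iff]
      constructor
      · rw [Walk.cons_isPath_iff]
        exact ⟨hpath, hymem⟩
      · rw [Walk.edges_cons, List.mem_cons]
        rintro (h | h)
        · rw [Sym2.eq_iff] at h
          rcases h with ⟨h1, h2⟩ | ⟨h1, h2⟩
          · rw [hfst] at h1; simp at h1
          · exact d.adj.ne h1
        · exact hymem ((r.append q).snd_mem_support_of_mem_edges h)
    · left
      rw [hsplit]
      simp [Walk.length_append, Walk.length_cons]
      omega
    · intro x hx
      rw [hsplit, Walk.mem_support_append_iff] at hx
      simp only [Walk.support_cons, List.mem_cons, Walk.mem_support_append_iff]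
      rcases hx with h | h
      · tauto
      · rw [Walk.support_cons, List.mem_cons] at h
        tauto
  · -- no left-left edge: cycle alternates, insert a left and a right vertex
    push_neg at hLL
    have hLout : ∃ i : Fin p, Sum.inl i ∉ C.support := by
      by_contra hcon
      push_neg at hcon
      have h1 := hcount (fun x => x.isLeft) (by
        intro d hdm
        have := hLL d hdm
        tauto)
      have h2 := hcard Sum.inl (fun _ _ h => by injection h) (fun x => x.isLeft)
        (fun x => rfl) hcon
      simp [Fintype.card_fin] at h2
      omega
    obtain ⟨j, hj⟩ := hR
    obtain ⟨i, hi⟩ := hLout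
    -- properties of first edge
    have hd0 : (⟨(a, c), hac⟩ : G.Dart) ∈ C.darts := by
      rw [hCeq, Walk.darts_cons]; simp
    have hnotboth : ¬(a.isLeft ∧ c.isLeft) := by
      have := hLL _ hd0
      simpa using this
    have honeleft : a.isLeft ∨ c.isLeft := (hhigh hac).2
    have hCcyc : (Walk.cons hac Q).IsCycle := hCeq ▸ hC
    rw [Walk.cons_isCycle_iff] at hCcyc
    obtain ⟨hQpath, hQedge⟩ := hCcyc
    have hjQ : Sum.inr j ∉ Q.support := fun h => hj (by rw [hCeq, Walk.support_cons]; simp [h])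
    have hiQ : Sum.inl i ∉ Q.support := fun h => hi (by rw [hCeq, Walk.support_cons]; simp [h])
    have hja : Sum.inr j ≠ a := fun h => hj (h ▸ C.start_mem_support)
    have hia : Sum.inl i ≠ a := fun h => hi (h ▸ C.start_mem_support)
    by_cases hA : a.isLeft = true
    · -- a is left, so c is right
      obtain ⟨ia, ha⟩ : ∃ ia, a = Sum.inl ia := by
        cases hc : a
        · exact ⟨_, rfl⟩
        · rw [hc] at hA; simp at hA
      obtain ⟨jc, hc⟩ : ∃ jc, c = Sum.inr jc := by
        cases hc : c
        · exfalso; apply hnotboth; rw [hc]; simp [hA]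
        · exact ⟨_, rfl⟩
      -- new cycle a - inr j - inl i - c - ... - a
      have h1 : G.Adj a (Sum.inr j) := hlow (by rw [ha]; simp)
      have h2 : G.Adj (Sum.inr j) (Sum.inl i) := hlow (by simp)
      have h3 : G.Adj (Sum.inl i) c := hlow (by rw [hc]; simp)
      refine ⟨a, Walk.cons h1 (Walk.cons h2 (Walk.cons h3 Q)), ?_, ?_, ?_⟩
      · rw [Walk.cons_isCycle_iff]
        constructor
        · rw [Walk.cons_isPath_iff, Walk.cons_isPath_iff]
          refine ⟨⟨hQpath, hiQ⟩, ?_⟩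
          rw [Walk.support_cons, List.mem_cons]
          rintro (h | h)
          · simp at h
          · exact hjQ h
        · rw [Walk.edges_cons, Walk.edges_cons, List.mem_cons, List.mem_cons]
          rintro (h | h | h)
          · rw [Sym2.eq_iff] at h
            rcases h with ⟨h1', h2'⟩ | ⟨h1', h2'⟩
            · exact hja h1'.symm
            · exact hia h1'.symm
          · rw [Sym2.eq_iff] at h
            rcases h with ⟨h1', h2'⟩ | ⟨h1', h2'⟩
            · exact hia h1'.symm
            · exact (hhigh hac).1 h1'
          · exact hjQ (Q.snd_mem_support_of_mem_edges h)
      · right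
        rw [hCeq]
        simp [Walk.length_cons]
      · intro x hx
        rw [hCeq, Walk.support_cons, List.mem_cons] at hx
        simp only [Walk.support_cons, List.mem_cons]
        tauto
    · -- a is right, so c is left
      have hcl : c.isLeft = true := by
        rcases honeleft with h | h
        · exact absurd h hA
        · exact h
      obtain ⟨ja, ha⟩ : ∃ ja, a = Sum.inr ja := by
        cases hc' : a
        · rw [hc'] at hA; simp at hA
        · exact ⟨_, rfl⟩
      obtain ⟨ic, hc⟩ : ∃ ic, c = Sum.inl ic := by
        cases hc' : c
        · exact ⟨_, rfl⟩
        · rw [hc'] at hcl; simp at hcl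
      -- new cycle a - inl i - inr j - c - ... - a
      have h1 : G.Adj a (Sum.inl i) := hlow (by rw [ha]; simp)
      have h2 : G.Adj (Sum.inl i) (Sum.inr j) := hlow (by simp)
      have h3 : G.Adj (Sum.inr j) c := hlow (by rw [hc]; simp)
      refine ⟨a, Walk.cons h1 (Walk.cons h2 (Walk.cons h3 Q)), ?_, ?_, ?_⟩
      · rw [Walk.cons_isCycle_iff]
        constructor
        · rw [Walk.cons_isPath_iff, Walk.cons_isPath_iff]
          refine ⟨⟨hQpath, hjQ⟩, ?_⟩
          rw [Walk.support_cons, List.mem_cons]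
          rintro (h | h)
          · simp at h
          · exact hiQ h
        · rw [Walk.edges_cons, Walk.edges_cons, List.mem_cons, List.mem_cons]
          rintro (h | h | h)
          · rw [Sym2.eq_iff] at h
            rcases h with ⟨h1', h2'⟩ | ⟨h1', h2'⟩
            · exact hia h1'.symm
            · exact hja h1'.symm
          · rw [Sym2.eq_iff] at h
            rcases h with ⟨h1', h2'⟩ | ⟨h1', h2'⟩
            · exact hja h1'.symm
            · exact (hhigh hac).1 h1'
          · exact hiQ (Q.snd_mem_support_of_mem_edges h)
      · right
        rw [hCeq]
        simp [Walk.length_cons]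
      · intro x hx
        rw [hCeq, Walk.support_cons, List.mem_cons] at hx
        simp only [Walk.support_cons, List.mem_cons]
        tauto
end

section
/- Let G be a connected graph with at least three vertices such that |N(u) ∩ N(v)| ≥ 2 for each pair of vertices u, v at distance 2. Then every vertex of G lies on a cycle of length 3 or 4. -/
open SimpleGraph

theorem stmt16 {V : Type*} (G : SimpleGraph V)
    (hconn : G.Connected) (hcard : 3 ≤ ENat.card V)
    (h2 : ∀ u v : V, G.dist u v = 2 →
      2 ≤ (G.neighborSet u ∩ G.neighborSet v).ncard) :
    ∀ x : V, ∃ (a : V) (C : G.Walk a a), C.IsCycle ∧ x ∈ C.support ∧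
      (C.length = 3 ∨ C.length = 4) := by
  intro x
  classical
  have hnt : Nontrivial V := by
    rw [← ENat.one_lt_card_iff_nontrivial]
    exact lt_of_lt_of_le (by norm_num) hcard
  -- x has two distinct neighbors
  have hne : ∃ u v, G.Adj x u ∧ G.Adj x v ∧ u ≠ v := by
    by_contra hc
    push_neg at hc
    -- first get one neighbor y
    obtain ⟨z, hz⟩ := exists_ne x
    obtain ⟨p⟩ := hconn x z
    have hy : ∃ y, G.Adj x y := by
      cases p with
      | nil => exact absurd rfl hz.symm
      | cons h q => exact ⟨_, h⟩
    obtain ⟨y, hy⟩ := hy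
    -- every neighbor of x is y
    have huniq : ∀ w, G.Adj x w → w = y := fun w hw => hc w y hw hy
    -- get a vertex distinct from x and y
    have hw : ∃ w, w ≠ x ∧ w ≠ y := by
      by_contra hcw
      push_neg at hcw
      have hinj : Function.Injective (fun w : V => if w = x then (0 : Fin 2) else 1) := by
        intro a b hab
        simp only at hab
        by_cases ha : a = x <;> by_cases hb : b = x <;> simp [ha, hb] at hab ⊢
        · rw [hcw a ha, hcw b hb]
      have hfin : Finite V := Finite.of_injective _ hinj
      have hle2 : Nat.card V ≤ 2 := by
        have := Nat.card_le_card_of_injective _ hinj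
        simpa using this
      rw [ENat.card_eq_coe_natCard] at hcard
      have : (3 : ℕ∞) ≤ 2 := hcard.trans (by exact_mod_cast hle2)
      norm_num at this
    obtain ⟨w, hwx, hwy⟩ := hw
    -- find a vertex at distance 2 from x via a path to w
    obtain ⟨p0⟩ := hconn x w
    obtain ⟨p, hp⟩ := p0.toPath
    cases p with
    | nil => exact hwx rfl
    | cons h q =>
      rename_i y1
      have hy1 : y1 = y := huniq y1 h
      cases q with
      | nil => exact hwy hy1
      | cons h2' r =>
        rename_i z1
        have hz1x : z1 ≠ x := by
          intro hzz
          subst hzz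
          have := hp.support_nodup
          simp at this
        have hz1adj : ¬ G.Adj x z1 := by
          intro hadj
          exact h2'.ne (hy1.trans (huniq z1 hadj).symm)
        have hd : G.dist x z1 = 2 := by
          have hle : G.dist x z1 ≤ 2 := by
            have := G.dist_le (Walk.cons hy (Walk.cons (hy1 ▸ h2') Walk.nil))
            simpa using this
          have h0 : G.dist x z1 ≠ 0 := by
            intro hh
            rw [hconn.dist_eq_zero_iff] at hh
            exact hz1x hh.symm
          have h1 : G.dist x z1 ≠ 1 := by
            intro hh
            rw [dist_eq_one_iff_adj] at hh
            exact hz1adj hh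
          omega
        have := h2 x z1 hd
        have hsub : G.neighborSet x ∩ G.neighborSet z1 ⊆ {y} := by
          intro a ⟨ha1, _⟩
          exact huniq a ha1
        have := Set.ncard_le_ncard hsub (Set.finite_singleton y)
        simp [Set.ncard_singleton] at this
        omega
  obtain ⟨u, v, hxu, hxv, huv⟩ := hne
  by_cases hadj : G.Adj u v
  · -- triangle x - u - v - x
    refine ⟨x, Walk.cons hxu (Walk.cons hadj (Walk.cons hxv.symm Walk.nil)), ?_, ?_, Or.inl rfl⟩
    · rw [Walk.isCycle_def, Walk.isTrail_def]
      refine ⟨?_, ?_, ?_⟩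
      · simp [hxu.ne, hxv.ne, hadj.ne, huv, Sym2.eq, Sym2.rel_iff', hxu.ne', hxv.ne',
          hadj.ne', eq_comm, and_comm]
      · simp
      · simp [hxu.ne', hxv.ne', hadj.ne', huv, hxu.ne, hxv.ne, hadj.ne]
    · simp
  · have hd : G.dist u v = 2 := by
      have hle : G.dist u v ≤ 2 := by
        have := G.dist_le (Walk.cons hxu.symm (Walk.cons hxv Walk.nil))
        simpa using this
      have h0 : G.dist u v ≠ 0 := by
        intro hh
        rw [hconn.dist_eq_zero_iff] at hh
        exact huv hh
      have h1 : G.dist u v ≠ 1 := by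
        intro hh
        rw [dist_eq_one_iff_adj] at hh
        exact hadj hh
      omega
    have h2' := h2 u v hd
    obtain ⟨w, hw, hwx⟩ :=
      Set.exists_ne_of_one_lt_ncard (lt_of_lt_of_le one_lt_two h2') x
    obtain ⟨(hwu : G.Adj u w), (hwv : G.Adj v w)⟩ := hw
    -- 4-cycle x - u - w - v - x
    refine ⟨x, Walk.cons hxu (Walk.cons hwu (Walk.cons hwv.symm (Walk.cons hxv.symm Walk.nil))),
      ?_, ?_, Or.inr rfl⟩
    · rw [Walk.isCycle_def, Walk.isTrail_def]
      refine ⟨?_, ?_, ?_⟩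
      · simp [hxu.ne, hxv.ne, hwu.ne, hwv.ne, huv, hwx, Sym2.eq, Sym2.rel_iff', eq_comm]
        aesop
      · simp
      · simp [hxu.ne', hxv.ne', hwu.ne', hwv.ne', huv, hwx]
        aesop
    · simp
end

section
/- Let G be a connected bipartite L1-graph with maximum degree greater than 2. Then either G is a complete bipartite graph K_{n,n}, or G is obtained from some K_{n,n} by removing a single vertex, a single edge, or a perfect matching. -/
open SimpleGraph

/-- The complete bipartite graph `K_{n,n}` with a perfect matching removed. -/
def KnnMinusMatching (n : ℕ) : SimpleGraph (Fin n ⊕ Fin n) where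
  Adj x y :=
    match x, y with
    | Sum.inl i, Sum.inr j => i ≠ j
    | Sum.inr i, Sum.inl j => i ≠ j
    | _, _ => False
  symm := by
    constructor
    rintro (i | i) (j | j) h
    · exact h
    · exact fun hij => h hij.symm
    · exact fun hij => h hij.symm
    · exact h
  loopless := by constructor; rintro (i | i) h <;> exact h

/-- The complete bipartite graph `K_{n+1,n+1}` with a single edge
(the edge `inl 0 – inr 0`) removed. -/
def KnnMinusEdge (n : ℕ) : SimpleGraph (Fin (n + 1) ⊕ Fin (n + 1)) :=
  (completeBipartiteGraph (Fin (n + 1)) (Fin (n + 1))).deleteEdges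
    {s(Sum.inl 0, Sum.inr 0)}

namespace L1Aux

variable {V : Type*} {G : SimpleGraph V}

lemma fin2_eq_of_ne {a b x : Fin 2} (h1 : a ≠ b) (h2 : x ≠ b) : x = a := by omega

lemma walk_parity {C : V → Fin 2} (hc : ∀ {x y}, G.Adj x y → C x ≠ C y)
    {x y : V} (w : G.Walk x y) : Even w.length ↔ C x = C y := by
  induction w with
  | nil => simp
  | @cons a b c h p ih =>
    have hab := hc h
    rw [Walk.length_cons, Nat.even_add_one, ih]
    omega

lemma exists_adj_dist (hconn : G.Connected) {u v : V} {n : ℕ}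
    (h : G.dist u v = n + 1) : ∃ y, G.Adj u y ∧ G.dist y v = n := by
  obtain ⟨p, hp⟩ := (hconn u v).exists_walk_length_eq_dist
  cases p with
  | nil => simp at h
  | @cons _ b _ hadj q =>
    refine ⟨b, hadj, ?_⟩
    have h1 : G.dist b v ≤ n := by
      have := SimpleGraph.dist_le q
      simp [Walk.length_cons, h] at hp
      omega
    have h2 : G.dist u v ≤ G.dist u b + G.dist b v := hconn.dist_triangle
    have h3 : G.dist u b ≤ 1 := SimpleGraph.dist_le hadj.toWalk
    omega

lemma key (hlf : ∀ x : V, (G.neighborSet x).Finite) (hconn : G.Connected)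
    {C : V → Fin 2} (hc : ∀ {x y}, G.Adj x y → C x ≠ C y) (hL1 : IsL1Graph G)
    {u v w : V} (huv : C u = C v) (hne : u ≠ v) (h1 : G.Adj u w) (h2 : G.Adj v w) :
    (G.neighborSet w).ncard ≤ (G.neighborSet u ∩ G.neighborSet v).ncard + 1 := by
  have hnadj : ¬ G.Adj u v := fun h => hc h huv
  have hdist : G.dist u v = 2 := by
    have hle : G.dist u v ≤ 2 := by
      have := SimpleGraph.dist_le (Walk.cons h1 (Walk.cons h2.symm Walk.nil))
      simpa using this
    have h0 : G.dist u v ≠ 0 := fun h => hne (hconn.dist_eq_zero_iff.mp h)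
    have h1' : G.dist u v ≠ 1 := fun h => hnadj (SimpleGraph.dist_eq_one_iff_adj.mp h)
    omega
  have h3 := hL1 u v w hdist h1 h2
  have hdisj : Disjoint (G.neighborSet u ∪ G.neighborSet v) (G.neighborSet w) := by
    rw [Set.disjoint_left]
    rintro x (hx | hx) hxw
    · exact (hc h1) (fin2_eq_of_ne (hc hx) (hc hxw) ▸ rfl)
    · exact (hc h2) (fin2_eq_of_ne (hc hx) (hc hxw) ▸ rfl)
  have hU : (G.neighborSet u ∪ G.neighborSet v ∪ G.neighborSet w).ncard
      = (G.neighborSet u ∪ G.neighborSet v).ncard + (G.neighborSet w).ncard :=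
    Set.ncard_union_eq hdisj ((hlf u).union (hlf v)) (hlf w)
  have hI : (G.neighborSet u ∪ G.neighborSet v).ncard
      + (G.neighborSet u ∩ G.neighborSet v).ncard
      = (G.neighborSet u).ncard + (G.neighborSet v).ncard :=
    Set.ncard_union_add_ncard_inter _ _ (hlf u) (hlf v)
  have hwpos : 1 ≤ (G.neighborSet w).ncard := by
    have : u ∈ G.neighborSet w := h1.symm
    have := Set.ncard_le_ncard (Set.singleton_subset_iff.mpr this) (hlf w)
    simpa using this
  omega

section Flat
set_option linter.unusedSectionVars false

variable (hlf : ∀ x : V, (G.neighborSet x).Finite) (hconn : G.Connected)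
  {C : V → Fin 2} (hc : ∀ {x y}, G.Adj x y → C x ≠ C y) (hL1 : IsL1Graph G)
  {p0 p1 p2 p3 p4 : V} (h01 : G.Adj p0 p1) (h12 : G.Adj p1 p2)
  (h23 : G.Adj p2 p3) (h34 : G.Adj p3 p4) (hd : G.dist p0 p4 = 4)

include hlf hconn hc hL1 h01 h12 h23 h34 hd

lemma flat_nadj03 : ¬ G.Adj p0 p3 := by
  intro h
  have := SimpleGraph.dist_le (Walk.cons h (Walk.cons h34 Walk.nil))
  simp [hd] at this

lemma flat_ncommon : ∀ x, ¬ (G.Adj p0 x ∧ G.Adj p4 x) := by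
  rintro x ⟨ha, hb⟩
  have := SimpleGraph.dist_le (Walk.cons ha (Walk.cons hb.symm Walk.nil))
  simp [hd] at this

lemma flat_ne02 : p0 ≠ p2 := by
  intro h
  have := SimpleGraph.dist_le (Walk.cons (h ▸ h23) (Walk.cons h34 Walk.nil))
  simp [hd] at this

lemma flat_ne24 : p2 ≠ p4 := by
  intro h
  have := SimpleGraph.dist_le (Walk.cons h01 (Walk.cons (h ▸ h12) Walk.nil))
  simp [hd] at this

lemma flat_ne13 : p1 ≠ p3 := by
  intro h
  have := SimpleGraph.dist_le (Walk.cons h01 (Walk.cons (h ▸ h34) Walk.nil))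
  simp [hd] at this

lemma flat_c20 : C p2 = C p0 := fin2_eq_of_ne (hc h01) (Ne.symm (hc h12))

lemma flat_c31 : C p3 = C p1 := fin2_eq_of_ne (hc h12) (Ne.symm (hc h23))

lemma flat_c40 : C p4 = C p0 := by
  have c31 : C p3 = C p1 := flat_c31 hlf hconn hc hL1 h01 h12 h23 h34 hd
  exact fin2_eq_of_ne (hc h01) (c31 ▸ Ne.symm (hc h34))

lemma flat_N1 : G.neighborSet p1 = {p0, p2} := by
  set T := G.neighborSet p1 ∩ G.neighborSet p3 with hT
  have hp2T : p2 ∈ T := ⟨h12, h23.symm⟩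
  have c40 : C p4 = C p0 := flat_c40 hlf hconn hc hL1 h01 h12 h23 h34 hd
  have hn03 : ¬ G.Adj p0 p3 := flat_nadj03 hlf hconn hc hL1 h01 h12 h23 h34 hd
  have hn14 : ¬ G.Adj p1 p4 := by
    intro h
    have := SimpleGraph.dist_le (Walk.cons h01 (Walk.cons h Walk.nil))
    simp [hd] at this
  have hcom := flat_ncommon hlf hconn hc hL1 h01 h12 h23 h34 hd
  -- lower bound on degrees of elements of T
  have ha : ∀ a ∈ T, (G.neighborSet p1).ncard + (G.neighborSet p3).ncard
      ≤ (G.neighborSet a).ncard + 2 := by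
    rintro a ⟨ha1, ha3⟩
    have ha1' : G.Adj p1 a := ha1
    have ha3' : G.Adj p3 a := ha3
    have hap0 : a ≠ p0 := fun h => hn03 (h ▸ ha3').symm
    have hap4 : a ≠ p4 := fun h => hn14 (h ▸ ha1')
    have hca : C a = C p0 := fin2_eq_of_ne (hc h01) (Ne.symm (hc ha1'))
    have k1 := key hlf hconn hc hL1 hca hap0 ha1'.symm h01
    have k2 := key hlf hconn hc hL1 (hca.trans c40.symm) hap4 ha3'.symm h34.symm
    have hdisj : Disjoint (G.neighborSet a ∩ G.neighborSet p0)
        (G.neighborSet a ∩ G.neighborSet p4) := by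
      rw [Set.disjoint_left]
      rintro x ⟨-, hx0⟩ ⟨-, hx4⟩
      exact hcom x ⟨hx0, hx4⟩
    have hsub : (G.neighborSet a ∩ G.neighborSet p0) ∪ (G.neighborSet a ∩ G.neighborSet p4)
        ⊆ G.neighborSet a := by
      rintro x (hx | hx) <;> exact hx.1
    have hun := Set.ncard_union_eq hdisj ((hlf a).inter_of_left _) ((hlf a).inter_of_left _)
    have hle := Set.ncard_le_ncard hsub (hlf a)
    omega
  have hTub : ∀ a ∈ T, (G.neighborSet a).ncard ≤ T.ncard + 1 := by
    rintro a ⟨ha1, ha3⟩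
    exact key hlf hconn hc hL1 (flat_c31 hlf hconn hc hL1 h01 h12 h23 h34 hd).symm
      (flat_ne13 hlf hconn hc hL1 h01 h12 h23 h34 hd) ha1 ha3
  have hTfin : T.Finite := (hlf p1).inter_of_left _
  have hT3 : T.ncard ≤ (G.neighborSet p3).ncard :=
    Set.ncard_le_ncard Set.inter_subset_right (hlf p3)
  have hpair : ({p0, p2} : Set V) ⊆ G.neighborSet p1 := by
    rintro x (rfl | rfl)
    · exact h01.symm
    · exact h12
  have hpair2 : ({p0, p2} : Set V).ncard = 2 := Set.ncard_pair (flat_ne02 hlf hconn hc hL1 h01 h12 h23 h34 hd)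
  have h2le : 2 ≤ (G.neighborSet p1).ncard := by
    have := Set.ncard_le_ncard hpair (hlf p1)
    omega
  have hd1le : (G.neighborSet p1).ncard ≤ 3 := by
    have := ha p2 hp2T
    have := hTub p2 hp2T
    omega
  have hd1ne3 : (G.neighborSet p1).ncard ≠ 3 := by
    intro h3
    have h1 := ha p2 hp2T
    have h2 := hTub p2 hp2T
    have hTge : (G.neighborSet p3).ncard ≤ T.ncard := by omega
    have hTeq : T = G.neighborSet p3 :=
      Set.eq_of_subset_of_ncard_le Set.inter_subset_right hTge (hlf p3)
    have : p4 ∈ T := hTeq ▸ (h34 : p4 ∈ G.neighborSet p3)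
    exact hn14 this.1
  have : (G.neighborSet p1).ncard ≤ 2 := by omega
  exact (Set.eq_of_subset_of_ncard_le hpair (by omega) (hlf p1)).symm

lemma flat_dist_rev : G.dist p4 p0 = 4 := by rwa [SimpleGraph.dist_comm] at hd

lemma flat_N3 : G.neighborSet p3 = {p2, p4} := by
  have := flat_N1 hlf hconn hc hL1 h34.symm h23.symm h12.symm h01.symm
    (flat_dist_rev hlf hconn hc hL1 h01 h12 h23 h34 hd)
  rw [this, Set.pair_comm]

lemma flat_N2 : G.neighborSet p2 = {p1, p3} := by
  have hN1 := flat_N1 hlf hconn hc hL1 h01 h12 h23 h34 hd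
  have hn03 := flat_nadj03 hlf hconn hc hL1 h01 h12 h23 h34 hd
  have hne13 := flat_ne13 hlf hconn hc hL1 h01 h12 h23 h34 hd
  set T := G.neighborSet p1 ∩ G.neighborSet p3 with hT
  have hp2T : p2 ∈ T := ⟨h12, h23.symm⟩
  have hTeq : T = {p2} := by
    apply Set.eq_singleton_iff_unique_mem.mpr
    refine ⟨hp2T, ?_⟩
    rintro x ⟨hx1, hx3⟩
    have hx1' : x ∈ ({p0, p2} : Set V) := hN1 ▸ hx1
    rcases hx1' with rfl | rfl
    · exact absurd (hx3 : G.Adj p3 x).symm hn03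
    · rfl
  have hd2 : (G.neighborSet p2).ncard ≤ 2 := by
    have := key hlf hconn hc hL1 (flat_c31 hlf hconn hc hL1 h01 h12 h23 h34 hd).symm
      hne13 h12 h23.symm
    rw [← hT, hTeq] at this
    simpa using this
  have hpair : ({p1, p3} : Set V) ⊆ G.neighborSet p2 := by
    rintro x (rfl | rfl)
    · exact h12.symm
    · exact h23
  have hpair2 : ({p1, p3} : Set V).ncard = 2 := Set.ncard_pair hne13
  exact (Set.eq_of_subset_of_ncard_le hpair (by omega) (hlf p2)).symm

lemma flat_d0 : (G.neighborSet p0).ncard ≤ 2 := by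
  by_contra hcon
  push_neg at hcon
  have hN1 := flat_N1 hlf hconn hc hL1 h01 h12 h23 h34 hd
  have hN2 := flat_N2 hlf hconn hc hL1 h01 h12 h23 h34 hd
  have hn03 := flat_nadj03 hlf hconn hc hL1 h01 h12 h23 h34 hd
  have hne : (G.neighborSet p0 \ {p1}).Nonempty := by
    rw [Set.nonempty_iff_ne_empty]
    intro h
    have hsub : G.neighborSet p0 ⊆ {p1} := by
      intro x hx
      by_contra hx1
      exact absurd (Set.mem_diff_of_mem hx hx1) (h ▸ id)
    have := Set.ncard_le_ncard hsub (Set.finite_singleton p1)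
    simp at this
    omega
  obtain ⟨b, hb, hbne⟩ := hne
  have hb' : G.Adj p0 b := hb
  have hbne' : b ≠ p1 := by simpa using hbne
  have hcb : C b = C p1 := fin2_eq_of_ne (Ne.symm (hc h01)) (Ne.symm (hc hb'))
  have hk := key hlf hconn hc hL1 hcb hbne' hb'.symm h01.symm
  have hsub : G.neighborSet b ∩ G.neighborSet p1 ⊆ ({p0, p2} : Set V) := by
    rw [← hN1]; exact Set.inter_subset_right
  have hpair2 : ({p0, p2} : Set V).ncard = 2 :=
    Set.ncard_pair (flat_ne02 hlf hconn hc hL1 h01 h12 h23 h34 hd)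
  have heq : G.neighborSet b ∩ G.neighborSet p1 = {p0, p2} :=
    Set.eq_of_subset_of_ncard_le hsub (by omega) (Set.toFinite _)
  have hp2b : p2 ∈ G.neighborSet b := by
    have : p2 ∈ G.neighborSet b ∩ G.neighborSet p1 := heq ▸ (by simp : p2 ∈ ({p0, p2} : Set V))
    exact this.1
  have hb2 : b ∈ G.neighborSet p2 := (hp2b : G.Adj b p2).symm
  rw [hN2] at hb2
  rcases hb2 with rfl | rfl
  · exact hbne' rfl
  · exact hn03 hb'

lemma flat_d4 : (G.neighborSet p4).ncard ≤ 2 :=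
  flat_d0 hlf hconn hc hL1 h34.symm h23.symm h12.symm h01.symm
    (flat_dist_rev hlf hconn hc hL1 h01 h12 h23 h34 hd)

lemma flat_ext {y : V} (hy : G.Adj p0 y) (hyne : y ≠ p1) : G.dist y p3 = 4 := by
  have hN2 := flat_N2 hlf hconn hc hL1 h01 h12 h23 h34 hd
  have hN3 := flat_N3 hlf hconn hc hL1 h01 h12 h23 h34 hd
  have hn03 := flat_nadj03 hlf hconn hc hL1 h01 h12 h23 h34 hd
  have hcom := flat_ncommon hlf hconn hc hL1 h01 h12 h23 h34 hd
  have hcy : C y = C p3 := by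
    have c31 := flat_c31 hlf hconn hc hL1 h01 h12 h23 h34 hd
    exact (fin2_eq_of_ne (Ne.symm (hc hy)) (Ne.symm (c31 ▸ hc h01))).symm
  have hyne3 : y ≠ p3 := fun h => hn03 (h ▸ hy)
  have hle : G.dist y p3 ≤ 4 := by
    have := SimpleGraph.dist_le
      (Walk.cons hy.symm (Walk.cons h01 (Walk.cons h12 (Walk.cons h23 Walk.nil))))
    simpa using this
  have heven : Even (G.dist y p3) := by
    obtain ⟨p, hp⟩ := (hconn y p3).exists_walk_length_eq_dist
    exact hp ▸ (walk_parity hc p).mpr hcy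
  have hne0 : G.dist y p3 ≠ 0 := fun h => hyne3 (hconn.dist_eq_zero_iff.mp h)
  have hne2 : G.dist y p3 ≠ 2 := by
    intro h2
    obtain ⟨w, hw1, hw2⟩ := exists_adj_dist hconn (h2 : G.dist y p3 = 1 + 1)
    have hw3 : G.Adj w p3 := SimpleGraph.dist_eq_one_iff_adj.mp hw2
    have : w ∈ G.neighborSet p3 := hw3.symm
    rw [hN3] at this
    rcases this with rfl | rfl
    · have hy2 : y ∈ G.neighborSet w := hw1.symm
      rw [hN2] at hy2
      rcases hy2 with rfl | rfl
      · exact hyne rfl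
      · exact hyne3 rfl
    · exact hcom y ⟨hy, hw1.symm⟩
  obtain ⟨k, hk⟩ := heven
  omega

end Flat

section Global

variable (hlf : ∀ x : V, (G.neighborSet x).Finite) (hconn : G.Connected)
  {C : V → Fin 2} (hc : ∀ {x y}, G.Adj x y → C x ≠ C y) (hL1 : IsL1Graph G)
  {z : V} (hz : 3 ≤ (G.neighborSet z).ncard)

include hlf hconn hc hL1 hz

lemma ncard_pair_le (a b : V) : ({a, b} : Set V).ncard ≤ 2 := by
  have := Set.ncard_insert_le a ({b} : Set V)
  simp at this
  omega

lemma no_flat : ∀ m : ℕ, ∀ p0 p1 p2 p3 p4 : V, G.Adj p0 p1 → G.Adj p1 p2 →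
    G.Adj p2 p3 → G.Adj p3 p4 → G.dist p0 p4 = 4 → G.dist p2 z = m → False := by
  intro m
  induction m using Nat.strong_induction_on with
  | _ m ih =>
    intro p0 p1 p2 p3 p4 h01 h12 h23 h34 hd hm
    have hN1 := flat_N1 hlf hconn hc hL1 h01 h12 h23 h34 hd
    have hN2 := flat_N2 hlf hconn hc hL1 h01 h12 h23 h34 hd
    have hN3 := flat_N3 hlf hconn hc hL1 h01 h12 h23 h34 hd
    have hd0 := flat_d0 hlf hconn hc hL1 h01 h12 h23 h34 hd
    have hd4 := flat_d4 hlf hconn hc hL1 h01 h12 h23 h34 hd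
    have hdeg : ∀ x : V, x = p0 ∨ x = p1 ∨ x = p2 ∨ x = p3 ∨ x = p4 →
        (G.neighborSet x).ncard ≤ 2 := by
      rintro x (rfl | rfl | rfl | rfl | rfl)
      · exact hd0
      · rw [hN1]; exact ncard_pair_le hlf hconn hc hL1 hz _ _
      · rw [hN2]; exact ncard_pair_le hlf hconn hc hL1 hz _ _
      · rw [hN3]; exact ncard_pair_le hlf hconn hc hL1 hz _ _
      · exact hd4
    match m, hm with
    | 0, hm =>
      have : p2 = z := hconn.dist_eq_zero_iff.mp hm
      have := hdeg z (by tauto)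
      omega
    | 1, hm =>
      have hadj : G.Adj p2 z := SimpleGraph.dist_eq_one_iff_adj.mp hm
      have : z ∈ G.neighborSet p2 := hadj
      rw [hN2] at this
      rcases this with rfl | rfl
      · have := hdeg z (by tauto); omega
      · have := hdeg z (by tauto); omega
    | 2, hm =>
      obtain ⟨y, hy1, hy2⟩ := exists_adj_dist hconn (hm : G.dist p2 z = 1 + 1)
      have hyz : G.Adj y z := SimpleGraph.dist_eq_one_iff_adj.mp hy2
      have : y ∈ G.neighborSet p2 := hy1
      rw [hN2] at this
      rcases this with rfl | rfl
      · have : z ∈ G.neighborSet y := hyz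
        rw [hN1] at this
        rcases this with rfl | rfl
        · have := hdeg z (by tauto); omega
        · have := hdeg z (by tauto); omega
      · have : z ∈ G.neighborSet y := hyz
        rw [hN3] at this
        rcases this with rfl | rfl
        · have := hdeg z (by tauto); omega
        · have := hdeg z (by tauto); omega
    | (k + 3), hm =>
      obtain ⟨y, hy1, hy2⟩ := exists_adj_dist hconn (hm : G.dist p2 z = (k + 2) + 1)
      have : y ∈ G.neighborSet p2 := hy1
      rw [hN2] at this
      rcases this with rfl | rfl
      · -- y = p1 : walk back towards p0
        obtain ⟨y1, hy11, hy12⟩ := exists_adj_dist hconn (hy2 : G.dist y z = (k + 1) + 1)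
        have : y1 ∈ G.neighborSet y := hy11
        rw [hN1] at this
        rcases this with rfl | rfl
        · -- y1 = p0
          obtain ⟨y0, hy01, hy02⟩ := exists_adj_dist hconn (hy12 : G.dist y1 z = k + 1)
          have hy0ne : y0 ≠ y := by
            intro h
            rw [h] at hy02
            omega
          have hext := flat_ext hlf hconn hc hL1 h01 h12 h23 h34 hd hy01 hy0ne
          exact ih (k + 2) (by omega) y0 y1 y p2 p3 hy01.symm h01 h12 h23 hext hy2
        · -- y1 = p2 : contradiction with distances
          rw [hm] at hy12
          omega
      · -- y = p3 : mirror
        obtain ⟨y1, hy11, hy12⟩ := exists_adj_dist hconn (hy2 : G.dist y z = (k + 1) + 1)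
        have : y1 ∈ G.neighborSet y := hy11
        rw [hN3] at this
        rcases this with rfl | rfl
        · rw [hm] at hy12
          omega
        · -- y1 = p4
          obtain ⟨y0, hy01, hy02⟩ := exists_adj_dist hconn (hy12 : G.dist y1 z = k + 1)
          have hy0ne : y0 ≠ y := by
            intro h
            rw [h] at hy02
            omega
          have hext := flat_ext hlf hconn hc hL1 h34.symm h23.symm h12.symm h01.symm
            (flat_dist_rev hlf hconn hc hL1 h01 h12 h23 h34 hd) hy01 hy0ne
          exact ih (k + 2) (by omega) y0 y1 y p2 p1 hy01.symm h34.symm h23.symm h12.symm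
            hext hy2

lemma common_nbr {u v : V} (hC : C u = C v) (hne : u ≠ v) :
    ∃ w, G.Adj u w ∧ G.Adj v w := by
  have hne0 : G.dist u v ≠ 0 := fun h => hne (hconn.dist_eq_zero_iff.mp h)
  have heven : Even (G.dist u v) := by
    obtain ⟨p, hp⟩ := (hconn u v).exists_walk_length_eq_dist
    exact hp ▸ (walk_parity hc p).mpr hC
  have hlt : G.dist u v < 4 := by
    by_contra hge
    push_neg at hge
    obtain ⟨y1, hy1, hd1⟩ := exists_adj_dist hconn
      (show G.dist u v = (G.dist u v - 1) + 1 by omega)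
    obtain ⟨y2, hy2, hd2⟩ := exists_adj_dist hconn
      (show G.dist y1 v = (G.dist u v - 2) + 1 by omega)
    obtain ⟨y3, hy3, hd3⟩ := exists_adj_dist hconn
      (show G.dist y2 v = (G.dist u v - 3) + 1 by omega)
    obtain ⟨y4, hy4, hd4⟩ := exists_adj_dist hconn
      (show G.dist y3 v = (G.dist u v - 4) + 1 by omega)
    have hle4 : G.dist u y4 ≤ 4 := by
      have := SimpleGraph.dist_le
        (Walk.cons hy1 (Walk.cons hy2 (Walk.cons hy3 (Walk.cons hy4 Walk.nil))))
      simpa using this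
    have htri : G.dist u v ≤ G.dist u y4 + G.dist y4 v := hconn.dist_triangle
    have hd4' : G.dist u y4 = 4 := by omega
    exact no_flat hlf hconn hc hL1 hz (G.dist y2 z) u y1 y2 y3 y4 hy1 hy2 hy3 hy4 hd4' rfl
  have hd2 : G.dist u v = 2 := by
    obtain ⟨k, hk⟩ := heven
    omega
  obtain ⟨w, hw1, hw2⟩ := exists_adj_dist hconn (hd2 : G.dist u v = 1 + 1)
  exact ⟨w, hw1, (SimpleGraph.dist_eq_one_iff_adj.mp hw2).symm⟩

/-- Every vertex misses at most one vertex of the other side. -/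
lemma miss_unique {x a1 a2 : V} (h1 : C a1 ≠ C x) (h2 : C a2 ≠ C x)
    (hn1 : ¬ G.Adj x a1) (hn2 : ¬ G.Adj x a2) : a1 = a2 := by
  by_contra hne
  have hCa : C a1 = C a2 := fin2_eq_of_ne h2 h1
  obtain ⟨w, hw1, hw2⟩ := common_nbr hlf hconn hc hL1 hz hCa hne
  have hCw : C w = C x := fin2_eq_of_ne h1.symm (Ne.symm (hc hw1))
  have hwx : w ≠ x := fun h => hn1 ((h ▸ hw1).symm)
  obtain ⟨a0, ha01, ha02⟩ := common_nbr hlf hconn hc hL1 hz hCw hwx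
  set S := G.neighborSet w ∩ G.neighborSet x with hS
  have ha0S : a0 ∈ S := ⟨ha01, ha02⟩
  have hSfin : S.Finite := (hlf w).inter_of_left _
  -- every element of S bounds via key on (w, x)
  have hkS : (G.neighborSet a0).ncard ≤ S.ncard + 1 :=
    key hlf hconn hc hL1 hCw hwx ha01 ha02
  -- S ∪ {a1, a2} ⊆ N w, disjointly
  have hsub : S ∪ {a1, a2} ⊆ G.neighborSet w := by
    rintro t (ht | rfl | rfl)
    · exact ht.1
    · exact hw1.symm
    · exact hw2.symm
  have hdisj : Disjoint S ({a1, a2} : Set V) := by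
    rw [Set.disjoint_left]
    rintro t ⟨-, htx⟩ (rfl | rfl)
    · exact hn1 htx
    · exact hn2 htx
  have hcard : S.ncard + 2 ≤ (G.neighborSet w).ncard := by
    have hu := Set.ncard_union_eq hdisj hSfin (Set.toFinite _)
    have hp := Set.ncard_pair hne
    have := Set.ncard_le_ncard hsub (hlf w)
    omega
  -- key on (a1, a0) with common neighbour w
  have hCa0 : C a1 = C a0 := by
    have : C a0 ≠ C x := hCw ▸ hc ha01.symm
    exact fin2_eq_of_ne this h1
  have hnea0 : a1 ≠ a0 := fun h => hn1 (by rw [h]; exact ha02)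
  have hk2 := key hlf hconn hc hL1 hCa0 hnea0 hw1 ha01.symm
  -- conclude N a0 ⊆ N a1
  have hfinal : (G.neighborSet a0).ncard ≤ (G.neighborSet a1 ∩ G.neighborSet a0).ncard := by
    omega
  have heq : G.neighborSet a1 ∩ G.neighborSet a0 = G.neighborSet a0 :=
    Set.eq_of_subset_of_ncard_le Set.inter_subset_right hfinal (hlf a0)
  have hxa1 : x ∈ G.neighborSet a1 := by
    have hx0 : x ∈ G.neighborSet a0 := ha02.symm
    rw [← heq] at hx0
    exact hx0.1
  exact hn1 (hxa1 : G.Adj a1 x).symm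

end Global

section Count

/-- The set of "missed" vertices of the opposite side. -/
def missSet (G : SimpleGraph V) (C : V → Fin 2) (x : V) : Set V :=
  {y | C y ≠ C x ∧ ¬ G.Adj x y}

variable (hlf : ∀ x : V, (G.neighborSet x).Finite) (hconn : G.Connected)
  {C : V → Fin 2} (hc : ∀ {x y}, G.Adj x y → C x ≠ C y) (hL1 : IsL1Graph G)
  {z : V} (hz : 3 ≤ (G.neighborSet z).ncard)

include hlf hconn hc hL1 hz

lemma miss_subsingleton (x : V) : (missSet G C x).Subsingleton := by
  rintro a ⟨ha1, ha2⟩ b ⟨hb1, hb2⟩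
  exact miss_unique hlf hconn hc hL1 hz ha1 hb1 ha2 hb2

lemma nbr_nonempty (x : V) : (G.neighborSet x).Nonempty := by
  by_cases hxz : x = z
  · subst hxz
    rw [← Set.ncard_pos (hlf x)] at *
    omega
  · obtain ⟨p⟩ := hconn x z
    cases p with
    | nil => exact absurd rfl hxz
    | cons h q => exact ⟨_, h⟩

lemma univ_fin : (Set.univ : Set V).Finite := by
  obtain ⟨a0, ha0⟩ := nbr_nonempty hlf hconn hc hL1 hz z
  have ha0' : G.Adj z a0 := ha0
  have hfin1 : ∀ y : V, ({x | C x ≠ C y} : Set V).Finite := by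
    intro y
    have hsub : {x | C x ≠ C y} ⊆ G.neighborSet y ∪ missSet G C y := by
      intro x hx
      by_cases hadj : G.Adj y x
      · exact Or.inl hadj
      · exact Or.inr ⟨hx, hadj⟩
    exact ((hlf y).union (miss_subsingleton hlf hconn hc hL1 hz y).finite).subset hsub
  have hsub : (Set.univ : Set V) ⊆ {x | C x ≠ C z} ∪ {x | C x ≠ C a0} := by
    intro x _
    by_cases h : C x = C z
    · exact Or.inr (fun hh => (hc ha0') (h.symm.trans hh))
    · exact Or.inl h
  exact ((hfin1 z).union (hfin1 a0)).subset hsub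

lemma adj_characterization {x y : V} :
    G.Adj x y ↔ (C x ≠ C y ∧ y ∉ missSet G C x) := by
  constructor
  · intro h
    exact ⟨hc h, fun hm => hm.2 h⟩
  · rintro ⟨h1, h2⟩
    by_contra hadj
    exact h2 ⟨h1.symm, hadj⟩

lemma nbr_eq_side_diff_miss {x : V} {i j : Fin 2} (hx : C x = i) (hij : j ≠ i) :
    G.neighborSet x = {y | C y = j} \ missSet G C x := by
  ext y
  constructor
  · intro h
    have h' : G.Adj x y := h
    refine ⟨?_, fun hm => hm.2 h'⟩
    have hthis := hc h'
    rw [hx] at hthis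
    exact fin2_eq_of_ne hij (Ne.symm hthis)
  · rintro ⟨h1, h2⟩
    have hcy : C y ≠ C x := by
      rw [show C x = i from hx, show C y = j from h1]
      exact hij
    exact (adj_characterization hlf hconn hc hL1 hz).mpr ⟨hcy.symm, h2⟩

lemma miss_sub_side {x : V} {i j : Fin 2} (hx : C x = i) (hij : j ≠ i) :
    missSet G C x ⊆ {y | C y = j} := by
  rintro y ⟨h1, -⟩
  rw [hx] at h1
  exact fin2_eq_of_ne hij h1

lemma deg_formula {x : V} {i j : Fin 2} (hx : C x = i) (hij : j ≠ i) :
    (G.neighborSet x).ncard + (missSet G C x).ncard = ({y | C y = j} : Set V).ncard := by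
  have hfin : ({y | C y = j} : Set V).Finite :=
    (univ_fin hlf hconn hc hL1 hz).subset (Set.subset_univ _)
  rw [nbr_eq_side_diff_miss hlf hconn hc hL1 hz hx hij]
  exact Set.ncard_diff_add_ncard_of_subset (miss_sub_side hlf hconn hc hL1 hz hx hij) hfin

lemma miss_symm {x y : V} (h : y ∈ missSet G C x) : x ∈ missSet G C y :=
  ⟨h.1.symm, fun hadj => h.2 hadj.symm⟩

end Count

section Cases

variable (hlf : ∀ x : V, (G.neighborSet x).Finite) (hconn : G.Connected)
  {C : V → Fin 2} (hc : ∀ {x y}, G.Adj x y → C x ≠ C y) (hL1 : IsL1Graph G)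
  {z : V} (hz : 3 ≤ (G.neighborSet z).ncard)

include hlf hconn hc hL1 hz

lemma side_fin (i : Fin 2) : ({x | C x = i} : Set V).Finite :=
  (univ_fin hlf hconn hc hL1 hz).subset (Set.subset_univ _)

lemma unmatched_nbr {x : V} {i j : Fin 2} (hx : C x = i) (hij : j ≠ i)
    (hm : missSet G C x = ∅) : G.neighborSet x = {y | C y = j} := by
  rw [nbr_eq_side_diff_miss hlf hconn hc hL1 hz hx hij, hm, Set.diff_empty]

lemma matched_nbr {x y0 : V} {i j : Fin 2} (hx : C x = i) (hij : j ≠ i)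
    (hm : missSet G C x = {y0}) : G.neighborSet x = {y | C y = j} \ {y0} := by
  rw [nbr_eq_side_diff_miss hlf hconn hc hL1 hz hx hij, hm]

lemma balance_le (hall : ∀ x : V, missSet G C x = ∅) {i j : Fin 2} (hij : j ≠ i) :
    ({x | C x = i} : Set V).ncard ≤ ({x | C x = j} : Set V).ncard + 1 := by
  by_cases h2 : ({x | C x = i} : Set V).ncard ≤ 1
  · omega
  · push_neg at h2
    rw [Set.one_lt_ncard_iff (side_fin hlf hconn hc hL1 hz i)] at h2
    obtain ⟨a1, a2, ha1, ha2, hne⟩ := h2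
    obtain ⟨w, hw1, hw2⟩ := common_nbr hlf hconn hc hL1 hz
      ((ha1 : C a1 = i).trans (ha2 : C a2 = i).symm) hne
    have hcw : C w = j := by
      have := hc hw1
      rw [(ha1 : C a1 = i)] at this
      exact fin2_eq_of_ne hij (Ne.symm this)
    have hN1 : G.neighborSet a1 = {y | C y = j} :=
      unmatched_nbr hlf hconn hc hL1 hz ha1 hij (hall a1)
    have hN2 : G.neighborSet a2 = {y | C y = j} :=
      unmatched_nbr hlf hconn hc hL1 hz ha2 hij (hall a2)
    have hNw : G.neighborSet w = {y | C y = i} :=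
      unmatched_nbr hlf hconn hc hL1 hz hcw (fun h => hij h.symm) (hall w)
    have hk := key hlf hconn hc hL1
      ((ha1 : C a1 = i).trans (ha2 : C a2 = i).symm) hne hw1 hw2
    rw [hN1, hN2, hNw, Set.inter_self] at hk
    exact hk

lemma m1_le {x0 y0 : V} (hx0 : missSet G C x0 = {y0})
    (hall : ∀ x : V, x ≠ x0 → x ≠ y0 → missSet G C x = ∅) :
    ({x | C x = C x0} : Set V).ncard ≤ ({x | C x = C y0} : Set V).ncard := by
  have hy0m : y0 ∈ missSet G C x0 := hx0 ▸ rfl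
  have hij : C y0 ≠ C x0 := hy0m.1
  have hnadj : ¬ G.Adj x0 y0 := hy0m.2
  -- a second vertex on x0's side
  obtain ⟨a2, ha2⟩ := nbr_nonempty hlf hconn hc hL1 hz y0
  have ha2' : G.Adj y0 a2 := ha2
  have hca2 : C a2 = C x0 := fin2_eq_of_ne hij.symm (Ne.symm (hc ha2'))
  have ha2x0 : a2 ≠ x0 := fun h => hnadj (h ▸ ha2').symm
  have ha2y0 : a2 ≠ y0 := fun h => (hc ha2') (congrArg C h).symm
  have hma2 : missSet G C a2 = ∅ := hall a2 ha2x0 ha2y0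
  -- a neighbour of x0
  obtain ⟨w, hw⟩ := nbr_nonempty hlf hconn hc hL1 hz x0
  have hw' : G.Adj x0 w := hw
  have hcw : C w = C y0 := fin2_eq_of_ne (Ne.symm hij).symm (Ne.symm (hc hw')) |>.symm ▸ rfl
  have hwy0 : w ≠ y0 := fun h => hnadj (h ▸ hw')
  have hwx0 : w ≠ x0 := fun h => (hc hw') (congrArg C h).symm
  have hmw : missSet G C w = ∅ := hall w hwx0 hwy0
  have hNw : G.neighborSet w = {y | C y = C x0} :=
    unmatched_nbr hlf hconn hc hL1 hz hcw hij.symm hmw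
  have hadj_a2w : G.Adj a2 w := by
    refine (adj_characterization hlf hconn hc hL1 hz).mpr ⟨?_, by simp [hma2]⟩
    rw [hca2, hcw]
    exact hij.symm
  have hk := key hlf hconn hc hL1 hca2.symm (Ne.symm ha2x0) hw' hadj_a2w
  have hdf := deg_formula hlf hconn hc hL1 hz (rfl : C x0 = C x0) hij
  rw [hx0, Set.ncard_singleton] at hdf
  have hIle : (G.neighborSet x0 ∩ G.neighborSet a2).ncard ≤ (G.neighborSet x0).ncard :=
    Set.ncard_le_ncard Set.inter_subset_left (hlf x0)
  have hNweq : (G.neighborSet w).ncard = ({x | C x = C x0} : Set V).ncard := by rw [hNw]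
  omega

lemma eq_singleton_of_mem_miss {x y : V} (h : y ∈ missSet G C x) :
    missSet G C x = {y} :=
  (miss_subsingleton hlf hconn hc hL1 hz x).eq_singleton_of_mem h

lemma two_matched_le {b1 b2 b3 a1 a2 : V} (h1 : missSet G C b1 = {a1})
    (h2 : missSet G C b2 = {a2}) (hb12 : b1 ≠ b2) (hbc : C b1 = C b2)
    (hb3 : C b3 = C b1) (hm3 : missSet G C b3 = ∅) :
    ({x | C x = C a1} : Set V).ncard + 1 ≤ ({x | C x = C b1} : Set V).ncard := by
  have ha1m : a1 ∈ missSet G C b1 := h1 ▸ rfl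
  have ha2m : a2 ∈ missSet G C b2 := h2 ▸ rfl
  have hca1 : C a1 ≠ C b1 := ha1m.1
  have hca2 : C a2 = C a1 := by
    have := ha2m.1
    rw [← hbc] at this
    exact fin2_eq_of_ne hca1 this
  have ha12 : a1 ≠ a2 := by
    intro h
    subst h
    have hs1 : b1 ∈ missSet G C a1 := miss_symm hlf hconn hc hL1 hz ha1m
    have hs2 : b2 ∈ missSet G C a1 := miss_symm hlf hconn hc hL1 hz ha2m
    exact hb12 ((miss_subsingleton hlf hconn hc hL1 hz a1) hs1 hs2)
  have hma1 : missSet G C a1 = {b1} :=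
    eq_singleton_of_mem_miss hlf hconn hc hL1 hz (miss_symm hlf hconn hc hL1 hz ha1m)
  have hma2 : missSet G C a2 = {b2} :=
    eq_singleton_of_mem_miss hlf hconn hc hL1 hz (miss_symm hlf hconn hc hL1 hz ha2m)
  have hN1 : G.neighborSet a1 = {y | C y = C b1} \ {b1} :=
    matched_nbr hlf hconn hc hL1 hz (rfl : C a1 = C a1) hca1.symm hma1
  have hN2 : G.neighborSet a2 = {y | C y = C b1} \ {b2} :=
    matched_nbr hlf hconn hc hL1 hz hca2 (hca2 ▸ hca1.symm) hma2
  have hb31 : b3 ≠ b1 := by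
    intro h
    rw [h, h1] at hm3
    exact Set.singleton_ne_empty a1 hm3
  have hb32 : b3 ≠ b2 := by
    intro h
    rw [h, h2] at hm3
    exact Set.singleton_ne_empty a2 hm3
  have hI : G.neighborSet a1 ∩ G.neighborSet a2 = {y | C y = C b1} \ {b1, b2} := by
    rw [hN1, hN2, Set.diff_inter_diff, Set.singleton_union, Set.insert_eq]
  have hadj13 : G.Adj a1 b3 := by
    refine (adj_characterization hlf hconn hc hL1 hz).mpr ⟨?_, by simp [hma1, hb31]⟩
    rw [hb3]
    exact hca1
  have hadj23 : G.Adj a2 b3 := by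
    refine (adj_characterization hlf hconn hc hL1 hz).mpr ⟨?_, by simp [hma2, hb32]⟩
    rw [hb3, hca2]
    exact hca1
  have hk := key hlf hconn hc hL1 hca2.symm ha12 hadj13 hadj23
  rw [hI] at hk
  have hN3 : G.neighborSet b3 = {y | C y = C a1} :=
    unmatched_nbr hlf hconn hc hL1 hz hb3 (hca1 : C a1 ≠ C b1) hm3
  have hsubpair : ({b1, b2} : Set V) ⊆ {y | C y = C b1} := by
    rintro t (rfl | rfl)
    · rfl
    · exact hbc.symm
  have hcardd : ({y | C y = C b1} \ {b1, b2} : Set V).ncard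
      = ({y | C y = C b1} : Set V).ncard - 2 := by
    rw [Set.ncard_diff hsubpair (Set.toFinite _), Set.ncard_pair hb12]
  have hple : 2 ≤ ({y | C y = C b1} : Set V).ncard := by
    have := Set.ncard_le_ncard hsubpair (side_fin hlf hconn hc hL1 hz (C b1))
    rw [Set.ncard_pair hb12] at this
    exact this
  have : (G.neighborSet b3).ncard = ({x | C x = C a1} : Set V).ncard := by rw [hN3]
  omega

open scoped Classical in
lemma allmatched_contra {i j : Fin 2} (hij : j ≠ i)
    (halli : ∀ x : V, C x = i → missSet G C x ≠ ∅)
    {b3 : V} (hb3 : C b3 = j) (hb3m : missSet G C b3 = ∅)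
    (hp2 : 2 ≤ ({x | C x = i} : Set V).ncard) : False := by
  set Si := ({x | C x = i} : Set V) with hSi
  set Sj := ({x | C x = j} : Set V) with hSj
  have hSifin : Si.Finite := side_fin hlf hconn hc hL1 hz i
  have hSjfin : Sj.Finite := side_fin hlf hconn hc hL1 hz j
  -- the partner function
  set f : V → V := fun x => if h : (missSet G C x).Nonempty then h.some else x with hf
  have hfmem : ∀ x : V, C x = i → f x ∈ missSet G C x := by
    intro x hx
    have hne : (missSet G C x).Nonempty := Set.nonempty_iff_ne_empty.mpr (halli x hx)
    simp only [hf, dif_pos hne]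
    exact hne.some_mem
  have hfcol : ∀ x : V, C x = i → C (f x) = j := by
    intro x hx
    have := (hfmem x hx).1
    rw [hx] at this
    exact fin2_eq_of_ne hij this
  have hfmiss : ∀ x : V, C x = i → missSet G C x = {f x} :=
    fun x hx => eq_singleton_of_mem_miss hlf hconn hc hL1 hz (hfmem x hx)
  have hfne3 : ∀ x : V, C x = i → f x ≠ b3 := by
    intro x hx h
    have := miss_symm hlf hconn hc hL1 hz (hfmem x hx)
    rw [h, hb3m] at this
    exact this
  have hinj : Set.InjOn f Si := by
    intro x hx y hy hxy
    have h1 := miss_symm hlf hconn hc hL1 hz (hfmem x hx)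
    have h2 := miss_symm hlf hconn hc hL1 hz (hfmem y hy)
    rw [hxy] at h1
    exact (miss_subsingleton hlf hconn hc hL1 hz (f y)) h1 h2
  have hmaps : ∀ x ∈ Si, f x ∈ Sj \ {b3} :=
    fun x hx => ⟨hfcol x hx, hfne3 x hx⟩
  have hple : Si.ncard ≤ (Sj \ {b3}).ncard :=
    Set.ncard_le_ncard_of_injOn f hmaps (hinj) hSjfin.diff
  have hb3Sj : b3 ∈ Sj := hb3
  have hdiffcard : (Sj \ {b3}).ncard = Sj.ncard - 1 := by
    rw [Set.ncard_diff (Set.singleton_subset_iff.mpr hb3Sj) (Set.finite_singleton _),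
      Set.ncard_singleton]
  have hq1 : 1 ≤ Sj.ncard := by
    have := Set.ncard_le_ncard (Set.singleton_subset_iff.mpr hb3Sj) hSjfin
    simpa using this
  -- two elements of Si
  obtain ⟨a1, a2, ha1, ha2, ha12⟩ := (Set.one_lt_ncard_iff hSifin).mp hp2
  have ha1' : C a1 = i := ha1
  have ha2' : C a2 = i := ha2
  -- degree of matched i-side vertices
  have hdegSi : ∀ x : V, C x = i → (G.neighborSet x).ncard + 1 = Sj.ncard := by
    intro x hx
    have := deg_formula hlf hconn hc hL1 hz hx hij
    rw [hfmiss x hx, Set.ncard_singleton] at this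
    exact this
  -- N b1 = Si \ {a1} where b1 = f a1
  have hmb1 : missSet G C (f a1) = {a1} := eq_singleton_of_mem_miss hlf hconn hc hL1 hz
    (miss_symm hlf hconn hc hL1 hz (hfmem a1 ha1'))
  have hmb2 : missSet G C (f a2) = {a2} := eq_singleton_of_mem_miss hlf hconn hc hL1 hz
    (miss_symm hlf hconn hc hL1 hz (hfmem a2 ha2'))
  have hNb1 : G.neighborSet (f a1) = Si \ {a1} :=
    matched_nbr hlf hconn hc hL1 hz (hfcol a1 ha1') (fun h => hij h.symm) hmb1
  have hNb2 : G.neighborSet (f a2) = Si \ {a2} :=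
    matched_nbr hlf hconn hc hL1 hz (hfcol a2 ha2') (fun h => hij h.symm) hmb2
  have hNb3 : G.neighborSet b3 = Si :=
    unmatched_nbr hlf hconn hc hL1 hz hb3 (fun h => hij h.symm) hb3m
  have hb13 : f a1 ≠ b3 := hfne3 a1 ha1'
  -- step (2) : Sj.ncard ≤ Si.ncard + 1
  have hstep2 : Sj.ncard ≤ Si.ncard + 1 := by
    have hIcard : (Si \ {a1}).ncard = Si.ncard - 1 := by
      rw [Set.ncard_diff (Set.singleton_subset_iff.mpr ha1) (Set.finite_singleton _), Set.ncard_singleton]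
    have hne : (Si \ {a1}).Nonempty := by
      rw [Set.nonempty_iff_ne_empty]
      intro h
      have := Set.ncard_eq_zero hSifin.diff |>.mpr h
      omega
    obtain ⟨a, ha⟩ := hne
    have haSi : C a = i := ha.1
    have hadj1 : G.Adj (f a1) a := by rw [← SimpleGraph.mem_neighborSet, hNb1]; exact ha
    have hadj3 : G.Adj b3 a := by rw [← SimpleGraph.mem_neighborSet, hNb3]; exact ha.1
    have hk := key hlf hconn hc hL1 ((hfcol a1 ha1').trans hb3.symm) hb13 hadj1 hadj3
    have hsub : G.neighborSet (f a1) ∩ G.neighborSet b3 ⊆ Si \ {a1} := by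
      rw [hNb1]; exact Set.inter_subset_left
    have hsc := Set.ncard_le_ncard hsub hSifin.diff
    have hda := hdegSi a haSi
    omega
  have hstep1 : Si.ncard + 1 ≤ Sj.ncard := by omega
  -- step (3) : max degree ≤ Si.ncard, so Si.ncard ≥ 3
  have hp3 : 3 ≤ Si.ncard := by
    by_cases hzC : C z = i
    · have := hdegSi z hzC
      omega
    · have hzj : C z = j := fin2_eq_of_ne hij hzC
      have hsub : G.neighborSet z ⊆ Si := by
        intro t ht
        have h1 : C z ≠ C t := hc (ht : G.Adj z t)
        rw [hzj] at h1
        exact fin2_eq_of_ne (Ne.symm hij) (Ne.symm h1)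
      have := Set.ncard_le_ncard hsub hSifin
      omega
  -- step (4) : final contradiction
  have hb12 : f a1 ≠ f a2 := fun h => ha12 (hinj ha1 ha2 h)
  have hI : G.neighborSet (f a1) ∩ G.neighborSet (f a2) = Si \ {a1, a2} := by
    rw [hNb1, hNb2, Set.diff_inter_diff, Set.singleton_union, Set.insert_eq]
  have hsubpair : ({a1, a2} : Set V) ⊆ Si := by
    rintro t (rfl | rfl)
    · exact ha1
    · exact ha2
  have hIcard : (Si \ {a1, a2}).ncard = Si.ncard - 2 := by
    rw [Set.ncard_diff hsubpair (Set.toFinite _), Set.ncard_pair ha12]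
  have hne : (Si \ {a1, a2}).Nonempty := by
    rw [Set.nonempty_iff_ne_empty]
    intro h
    have := Set.ncard_eq_zero hSifin.diff |>.mpr h
    omega
  obtain ⟨a, ha⟩ := hne
  have haSi : C a = i := ha.1
  have hadj1 : G.Adj (f a1) a := by
    rw [← SimpleGraph.mem_neighborSet, hNb1]
    exact ⟨ha.1, fun h => ha.2 (Set.mem_insert_iff.mpr (Or.inl (Set.mem_singleton_iff.mp h)))⟩
  have hadj2 : G.Adj (f a2) a := by
    rw [← SimpleGraph.mem_neighborSet, hNb2]
    exact ⟨ha.1, fun h => ha.2 (Set.mem_insert_iff.mpr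
      (Or.inr (Set.mem_singleton_iff.mpr (Set.mem_singleton_iff.mp h))))⟩
  have hk := key hlf hconn hc hL1 ((hfcol a1 ha1').trans (hfcol a2 ha2').symm) hb12 hadj1 hadj2
  rw [hI] at hk
  have hda := hdegSi a haSi
  omega

end Cases

section Iso

variable (hlf : ∀ x : V, (G.neighborSet x).Finite) (hconn : G.Connected)
  {C : V → Fin 2} (hc : ∀ {x y}, G.Adj x y → C x ≠ C y) (hL1 : IsL1Graph G)
  {z : V} (hz : 3 ≤ (G.neighborSet z).ncard)

/-- Build an equivalence of `V` with `Fin n ⊕ Fin m` from equivalences of the two sides. -/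
noncomputable def mkEquiv (P : V → Prop) [DecidablePred P] {n m : ℕ}
    (eA : {x // P x} ≃ Fin n) (eB : {x // ¬ P x} ≃ Fin m) : V ≃ (Fin n ⊕ Fin m) :=
  (Equiv.sumCompl P).symm.trans (Equiv.sumCongr eA eB)

lemma mkEquiv_pos {P : V → Prop} [DecidablePred P] {n m : ℕ} (eA : {x // P x} ≃ Fin n)
    (eB : {x // ¬ P x} ≃ Fin m) {x : V} (h : P x) :
    mkEquiv P eA eB x = Sum.inl (eA ⟨x, h⟩) := by
  simp only [mkEquiv, Equiv.trans_apply]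
  rw [Equiv.sumCompl_symm_apply_of_pos h]
  rfl

lemma mkEquiv_neg {P : V → Prop} [DecidablePred P] {n m : ℕ} (eA : {x // P x} ≃ Fin n)
    (eB : {x // ¬ P x} ≃ Fin m) {x : V} (h : ¬ P x) :
    mkEquiv P eA eB x = Sum.inr (eB ⟨x, h⟩) := by
  simp only [mkEquiv, Equiv.trans_apply]
  rw [Equiv.sumCompl_symm_apply_of_neg h]
  rfl

lemma side_equiv_fin {i : Fin 2} {n : ℕ} (hfin : ({x | C x = i} : Set V).Finite)
    (hn : ({x | C x = i} : Set V).ncard = n) :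
    Nonempty (↥({x | C x = i} : Set V) ≃ Fin n) := by
  haveI := hfin.fintype
  exact ⟨Fintype.equivFinOfCardEq (by
    rw [← Nat.card_eq_fintype_card, Nat.card_coe_set_eq, hn])⟩

noncomputable def not_side_equiv (C : V → Fin 2) {i j : Fin 2} (hij : j ≠ i) :
    {x : V // ¬ C x = i} ≃ ↥({x | C x = j} : Set V) :=
  Equiv.subtypeEquivRight (fun x => by
    constructor
    · intro h
      exact fin2_eq_of_ne hij h
    · intro h hi
      rw [h] at hi
      exact hij hi)

include hlf hconn hc hL1 hz

lemma iso_complete {i j : Fin 2} (hij : j ≠ i) (hall : ∀ x : V, missSet G C x = ∅)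
    {n m : ℕ} (hn : ({x | C x = i} : Set V).ncard = n)
    (hm : ({x | C x = j} : Set V).ncard = m) :
    Nonempty (G ≃g completeBipartiteGraph (Fin n) (Fin m)) := by
  classical
  obtain ⟨eA0⟩ := side_equiv_fin (C := C) (side_fin hlf hconn hc hL1 hz i) hn
  obtain ⟨eB0⟩ := side_equiv_fin (C := C) (side_fin hlf hconn hc hL1 hz j) hm
  set P : V → Prop := fun x => C x = i with hP
  let eA : {x // P x} ≃ Fin n := eA0
  let eB : {x // ¬ P x} ≃ Fin m := (not_side_equiv C hij).trans eB0
  set e := mkEquiv P eA eB with he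
  have hadj : ∀ x y : V, G.Adj x y ↔ C x ≠ C y := by
    intro x y
    rw [adj_characterization hlf hconn hc hL1 hz, hall]
    simp
  refine ⟨⟨e, ?_⟩⟩
  intro x y
  by_cases hx : P x <;> by_cases hy : P y
  · rw [he, mkEquiv_pos eA eB hx, mkEquiv_pos eA eB hy]
    constructor
    · rintro (⟨h1, h2⟩ | ⟨h1, h2⟩) <;> simp at h1 h2
    · intro h
      exact absurd (hx.trans hy.symm) (hc h)
  · rw [he, mkEquiv_pos eA eB hx, mkEquiv_neg eA eB hy]
    constructor
    · intro _
      rw [hadj, hx]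
      exact fun h => hy h.symm
    · intro _
      simp [completeBipartiteGraph]
  · rw [he, mkEquiv_neg eA eB hx, mkEquiv_pos eA eB hy]
    constructor
    · intro _
      rw [hadj, hy]
      exact fun h => hx h
    · intro _
      simp [completeBipartiteGraph]
  · rw [he, mkEquiv_neg eA eB hx, mkEquiv_neg eA eB hy]
    constructor
    · rintro (⟨h1, h2⟩ | ⟨h1, h2⟩) <;> simp at h1 h2
    · intro h
      have hcx : C x = j := fin2_eq_of_ne hij hx
      have hcy : C y = j := fin2_eq_of_ne hij hy
      exact absurd (hcx.trans hcy.symm) (hc h)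

lemma iso_minusedge {x0 y0 : V} (hx0m : missSet G C x0 = {y0})
    (hall : ∀ x : V, x ≠ x0 → x ≠ y0 → missSet G C x = ∅)
    {n : ℕ} (hn : ({x | C x = C x0} : Set V).ncard = n + 1)
    (hm : ({x | C x = C y0} : Set V).ncard = n + 1) :
    Nonempty (G ≃g KnnMinusEdge n) := by
  classical
  have hy0m : y0 ∈ missSet G C x0 := hx0m ▸ rfl
  have hij : C y0 ≠ C x0 := hy0m.1
  have hmy0 : missSet G C y0 = {x0} :=
    eq_singleton_of_mem_miss hlf hconn hc hL1 hz (miss_symm hlf hconn hc hL1 hz hy0m)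
  set i := C x0 with hi
  set j := C y0 with hj
  set P : V → Prop := fun x => C x = i with hP
  obtain ⟨eA1⟩ := side_equiv_fin (C := C) (side_fin hlf hconn hc hL1 hz i) hn
  obtain ⟨eB0⟩ := side_equiv_fin (C := C) (side_fin hlf hconn hc hL1 hz j) hm
  let eA : {x // P x} ≃ Fin (n + 1) := eA1.trans (Equiv.swap (eA1 ⟨x0, rfl⟩) 0)
  let eB1 : {x // ¬ P x} ≃ Fin (n + 1) := (not_side_equiv C hij).trans eB0
  have hy0P : ¬ P y0 := fun h => hij h
  let eB : {x // ¬ P x} ≃ Fin (n + 1) := eB1.trans (Equiv.swap (eB1 ⟨y0, hy0P⟩) 0)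
  have heA0 : ∀ (x : V) (hx : P x), (eA ⟨x, hx⟩ = 0 ↔ x = x0) := by
    intro x hx
    constructor
    · intro h
      have h2 : eA ⟨x, hx⟩ = eA ⟨x0, rfl⟩ := by
        rw [h]
        show _ = Equiv.swap (eA1 ⟨x0, rfl⟩) 0 (eA1 ⟨x0, rfl⟩)
        rw [Equiv.swap_apply_left]
      have := eA.injective h2
      exact congrArg Subtype.val this
    · rintro rfl
      exact Equiv.swap_apply_left _ _
  have heB0 : ∀ (x : V) (hx : ¬ P x), (eB ⟨x, hx⟩ = 0 ↔ x = y0) := by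
    intro x hx
    constructor
    · intro h
      have h2 : eB ⟨x, hx⟩ = eB ⟨y0, hy0P⟩ := by
        rw [h]
        show _ = Equiv.swap (eB1 ⟨y0, hy0P⟩) 0 (eB1 ⟨y0, hy0P⟩)
        rw [Equiv.swap_apply_left]
      have := eB.injective h2
      exact congrArg Subtype.val this
    · rintro rfl
      exact Equiv.swap_apply_left _ _
  have hadj_cross : ∀ x y : V, C x = i → ¬ C y = i → (G.Adj x y ↔ ¬(x = x0 ∧ y = y0)) := by
    intro x y hx hy
    have hcy : C y = j := fin2_eq_of_ne hij hy
    rw [adj_characterization hlf hconn hc hL1 hz]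
    have hcxy : C x ≠ C y := by
      rw [hx, hcy]
      exact fun h => hij h.symm
    by_cases hxx0 : x = x0
    · subst hxx0
      rw [hx0m]
      simp [hcxy]
    · have hxy0 : x ≠ y0 := by
        rintro rfl
        exact hij (hj.trans hx)
      rw [hall x hxx0 hxy0]
      simp [hcxy, hxx0]
  set e := mkEquiv P eA eB with he
  refine ⟨⟨e, ?_⟩⟩
  intro x y
  by_cases hx : P x <;> by_cases hy : P y
  · rw [he, mkEquiv_pos eA eB hx, mkEquiv_pos eA eB hy]
    simp only [KnnMinusEdge, SimpleGraph.deleteEdges_adj]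
    constructor
    · rintro ⟨(⟨h1, h2⟩ | ⟨h1, h2⟩), -⟩ <;> simp at h1 h2
    · intro h
      exact absurd (hx.trans hy.symm) (hc h)
  · rw [he, mkEquiv_pos eA eB hx, mkEquiv_neg eA eB hy]
    simp only [KnnMinusEdge, SimpleGraph.deleteEdges_adj]
    rw [hadj_cross x y hx hy]
    constructor
    · rintro ⟨-, h2⟩ ⟨rfl, rfl⟩
      apply h2
      rw [Set.mem_singleton_iff, Sym2.eq_iff]
      left
      constructor
      · rw [show ((0 : Fin (n+1))) = eA ⟨x, hx⟩ from ((heA0 x hx).mpr rfl).symm]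
      · rw [show ((0 : Fin (n+1))) = eB ⟨y, hy⟩ from ((heB0 y hy).mpr rfl).symm]
    · intro h
      refine ⟨by simp [completeBipartiteGraph], ?_⟩
      rw [Set.mem_singleton_iff, Sym2.eq_iff]
      rintro (⟨h1, h2⟩ | ⟨h1, h2⟩)
      · simp only [Sum.inl.injEq] at h1
        simp only [Sum.inr.injEq] at h2
        exact h ⟨(heA0 x hx).mp h1, (heB0 y hy).mp h2⟩
      · simp at h1
  · rw [he, mkEquiv_neg eA eB hx, mkEquiv_pos eA eB hy]
    simp only [KnnMinusEdge, SimpleGraph.deleteEdges_adj]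
    have hGxy : G.Adj x y ↔ ¬(y = x0 ∧ x = y0) := by
      rw [SimpleGraph.adj_comm]
      exact hadj_cross y x hy hx
    rw [hGxy]
    constructor
    · rintro ⟨-, h2⟩ ⟨rfl, rfl⟩
      apply h2
      rw [Set.mem_singleton_iff, Sym2.eq_iff]
      right
      constructor
      · rw [show ((0 : Fin (n+1))) = eB ⟨x, hx⟩ from ((heB0 x hx).mpr rfl).symm]
      · rw [show ((0 : Fin (n+1))) = eA ⟨y, hy⟩ from ((heA0 y hy).mpr rfl).symm]
    · intro h
      refine ⟨by simp [completeBipartiteGraph], ?_⟩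
      rw [Set.mem_singleton_iff, Sym2.eq_iff]
      rintro (⟨h1, h2⟩ | ⟨h1, h2⟩)
      · simp at h1
      · simp only [Sum.inl.injEq] at h2
        simp only [Sum.inr.injEq] at h1
        exact h ⟨(heA0 y hy).mp h2, (heB0 x hx).mp h1⟩
  · rw [he, mkEquiv_neg eA eB hx, mkEquiv_neg eA eB hy]
    simp only [KnnMinusEdge, SimpleGraph.deleteEdges_adj]
    constructor
    · rintro ⟨(⟨h1, h2⟩ | ⟨h1, h2⟩), -⟩ <;> simp at h1 h2
    · intro h
      have hcx : C x = j := fin2_eq_of_ne hij hx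
      have hcy : C y = j := fin2_eq_of_ne hij hy
      exact absurd (hcx.trans hcy.symm) (hc h)

lemma iso_matching {i j : Fin 2} (hij : j ≠ i)
    (hallm : ∀ x : V, missSet G C x ≠ ∅)
    {n : ℕ} (hn : ({x | C x = i} : Set V).ncard = n) :
    Nonempty (G ≃g KnnMinusMatching n) := by
  classical
  set f : V → V := fun x => if h : (missSet G C x).Nonempty then h.some else x with hf
  have hfmem : ∀ x : V, f x ∈ missSet G C x := by
    intro x
    have hne : (missSet G C x).Nonempty := Set.nonempty_iff_ne_empty.mpr (hallm x)
    simp only [hf, dif_pos hne]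
    exact hne.some_mem
  have hfmiss : ∀ x : V, missSet G C x = {f x} :=
    fun x => eq_singleton_of_mem_miss hlf hconn hc hL1 hz (hfmem x)
  have hff : ∀ x : V, f (f x) = x := by
    intro x
    have h1 : x ∈ missSet G C (f x) := miss_symm hlf hconn hc hL1 hz (hfmem x)
    have h2 : f (f x) ∈ missSet G C (f x) := hfmem (f x)
    exact (miss_subsingleton hlf hconn hc hL1 hz (f x)) h2 h1
  have hfc : ∀ x : V, C (f x) ≠ C x := fun x => (hfmem x).1
  obtain ⟨eA0⟩ := side_equiv_fin (C := C) (side_fin hlf hconn hc hL1 hz i) hn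
  set P : V → Prop := fun x => C x = i with hP
  let eA : {x // P x} ≃ Fin n := eA0
  let pe : {x // ¬ P x} ≃ {x // P x} :=
    { toFun := fun b => ⟨f b.1, fin2_eq_of_ne (Ne.symm b.2) (hfc b.1)⟩
      invFun := fun a => ⟨f a.1, fun h => (hfc a.1) (h.trans a.2.symm)⟩
      left_inv := fun b => Subtype.ext (hff b.1)
      right_inv := fun a => Subtype.ext (hff a.1) }
  let eB : {x // ¬ P x} ≃ Fin n := pe.trans eA
  have hadj_cross : ∀ x y : V, C x = i → ¬ C y = i → (G.Adj x y ↔ y ≠ f x) := by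
    intro x y hx hy
    rw [adj_characterization hlf hconn hc hL1 hz, hfmiss x]
    have hcxy : C x ≠ C y := fun h => hy (h ▸ hx)
    simp [hcxy]
  have hiff : ∀ (x y : V), x = f y ↔ y = f x := by
    intro x y
    constructor
    · intro h
      rw [h, hff]
    · intro h
      rw [h, hff]
  set e := mkEquiv P eA eB with he
  refine ⟨⟨e, ?_⟩⟩
  intro x y
  by_cases hx : P x <;> by_cases hy : P y
  · rw [he, mkEquiv_pos eA eB hx, mkEquiv_pos eA eB hy]
    constructor
    · intro h
      simp only [KnnMinusMatching] at h
    · intro h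
      exact absurd (hx.trans hy.symm) (hc h)
  · rw [he, mkEquiv_pos eA eB hx, mkEquiv_neg eA eB hy]
    show eA ⟨x, hx⟩ ≠ eA (pe ⟨y, hy⟩) ↔ _
    rw [hadj_cross x y hx hy]
    rw [ne_eq, Equiv.apply_eq_iff_eq, Subtype.mk.injEq]
    show ¬ (x = f y) ↔ _
    rw [hiff x y]
  · rw [he, mkEquiv_neg eA eB hx, mkEquiv_pos eA eB hy]
    show eA (pe ⟨x, hx⟩) ≠ eA ⟨y, hy⟩ ↔ _
    have hGxy : G.Adj x y ↔ x ≠ f y := by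
      rw [SimpleGraph.adj_comm]
      exact hadj_cross y x hy hx
    rw [hGxy]
    rw [ne_eq, Equiv.apply_eq_iff_eq, Subtype.mk.injEq]
    show ¬ (f x = y) ↔ _
    constructor
    · intro h h2
      rw [h2, hff] at h
      exact h rfl
    · intro h h2
      rw [← h2, hff] at h
      exact h rfl
  · rw [he, mkEquiv_neg eA eB hx, mkEquiv_neg eA eB hy]
    constructor
    · intro h
      simp only [KnnMinusMatching] at h
    · intro h
      have hcx : C x = j := fin2_eq_of_ne hij hx
      have hcy : C y = j := fin2_eq_of_ne hij hy
      exact absurd (hcx.trans hcy.symm) (hc h)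

end Iso

end L1Aux

open L1Aux in
theorem stmt19 {V : Type*} (G : SimpleGraph V)
    (hlf : ∀ x : V, (G.neighborSet x).Finite)
    (hconn : G.Connected) (hbip : G.Colorable 2) (hL1 : IsL1Graph G)
    (hdeg : ∃ x : V, 3 ≤ (G.neighborSet x).ncard) :
    (∃ n : ℕ, Nonempty (G ≃g completeBipartiteGraph (Fin n) (Fin n))) ∨
    (∃ n : ℕ, Nonempty (G ≃g completeBipartiteGraph (Fin n) (Fin (n + 1)))) ∨
    (∃ n : ℕ, Nonempty (G ≃g KnnMinusEdge n)) ∨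
    (∃ n : ℕ, Nonempty (G ≃g KnnMinusMatching n)) := by
  classical
  obtain ⟨c⟩ := hbip
  set C : V → Fin 2 := fun v => c v with hCdef
  have hc : ∀ {x y : V}, G.Adj x y → C x ≠ C y := fun h => c.valid h
  obtain ⟨z, hz⟩ := hdeg
  have h10 : (1 : Fin 2) ≠ 0 := by decide
  have h01 : (0 : Fin 2) ≠ 1 := by decide
  by_cases hall : ∀ x : V, missSet G C x = ∅
  · -- G is complete bipartite
    have hle1 : ({x | C x = 0} : Set V).ncard ≤ ({x | C x = 1} : Set V).ncard + 1 :=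
      balance_le hlf hconn hc hL1 hz hall h10
    have hle2 : ({x | C x = 1} : Set V).ncard ≤ ({x | C x = 0} : Set V).ncard + 1 :=
      balance_le hlf hconn hc hL1 hz hall h01
    set p := ({x | C x = 0} : Set V).ncard with hp
    set q := ({x | C x = 1} : Set V).ncard with hq
    rcases lt_trichotomy p q with h | h | h
    · have hqeq : q = p + 1 := by omega
      exact Or.inr (Or.inl ⟨p, iso_complete hlf hconn hc hL1 hz h10 hall hp.symm
        (by rw [← hq, hqeq])⟩)
    · exact Or.inl ⟨p, iso_complete hlf hconn hc hL1 hz h10 hall hp.symm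
        (by rw [← hq, ← h])⟩
    · have hpeq : p = q + 1 := by omega
      exact Or.inr (Or.inl ⟨q, iso_complete hlf hconn hc hL1 hz h01 hall hq.symm
        (by rw [← hp, hpeq])⟩)
  · push_neg at hall
    obtain ⟨x0, hx0⟩ := hall
    obtain ⟨y0, hy0⟩ := hx0
    have hx0m : missSet G C x0 = {y0} := eq_singleton_of_mem_miss hlf hconn hc hL1 hz hy0
    have hijx0 : C y0 ≠ C x0 := hy0.1
    have hmy0 : missSet G C y0 = {x0} :=
      eq_singleton_of_mem_miss hlf hconn hc hL1 hz (miss_symm hlf hconn hc hL1 hz hy0)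
    by_cases hone : ∀ x : V, x ≠ x0 → x ≠ y0 → missSet G C x = ∅
    · -- exactly one missing edge
      have e1 := m1_le hlf hconn hc hL1 hz hx0m hone
      have e2 := m1_le hlf hconn hc hL1 hz hmy0 (fun x h1 h2 => hone x h2 h1)
      have heq : ({x | C x = C x0} : Set V).ncard = ({x | C x = C y0} : Set V).ncard :=
        le_antisymm e1 e2
      have hpos : 1 ≤ ({x | C x = C x0} : Set V).ncard := by
        have hx0mem : x0 ∈ ({x | C x = C x0} : Set V) := rfl
        have := Set.ncard_le_ncard (Set.singleton_subset_iff.mpr hx0mem)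
          (side_fin hlf hconn hc hL1 hz (C x0))
        simpa using this
      obtain ⟨n, hn⟩ : ∃ n, ({x | C x = C x0} : Set V).ncard = n + 1 :=
        ⟨({x | C x = C x0} : Set V).ncard - 1, by omega⟩
      exact Or.inr (Or.inr (Or.inl ⟨n, iso_minusedge hlf hconn hc hL1 hz hx0m hone hn
        (by rw [← heq, hn])⟩))
    · -- at least two missing edges
      push_neg at hone
      obtain ⟨x1, hx1ne0, hx1ney0, hx1m⟩ := hone
      obtain ⟨y1, hy1⟩ := hx1m
      have hx1meq : missSet G C x1 = {y1} := eq_singleton_of_mem_miss hlf hconn hc hL1 hz hy1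
      -- produce two distinct matched vertices of the same colour
      obtain ⟨b1, b2, a1, a2, hb1m, hb2m, hb12, hbc⟩ :
          ∃ b1 b2 a1 a2 : V, missSet G C b1 = {a1} ∧ missSet G C b2 = {a2} ∧
            b1 ≠ b2 ∧ C b1 = C b2 := by
        by_cases hcc : C x1 = C x0
        · exact ⟨x0, x1, y0, y1, hx0m, hx1meq, Ne.symm hx1ne0, hcc.symm⟩
        · have : C x1 = C y0 := fin2_eq_of_ne hijx0 hcc
          exact ⟨y0, x1, x0, y1, hmy0, hx1meq, Ne.symm hx1ney0, this.symm⟩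
      have ha1m : a1 ∈ missSet G C b1 := hb1m ▸ rfl
      have ha2m : a2 ∈ missSet G C b2 := hb2m ▸ rfl
      have hca1 : C a1 ≠ C b1 := ha1m.1
      have hca2 : C a2 = C a1 := by
        have h := ha2m.1
        rw [← hbc] at h
        exact fin2_eq_of_ne hca1 h
      have ha12 : a1 ≠ a2 := by
        intro h
        subst h
        have hs1 : b1 ∈ missSet G C a1 := miss_symm hlf hconn hc hL1 hz ha1m
        have hs2 : b2 ∈ missSet G C a1 := miss_symm hlf hconn hc hL1 hz ha2m
        exact hb12 ((miss_subsingleton hlf hconn hc hL1 hz a1) hs1 hs2)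
      have hma1 : missSet G C a1 = {b1} :=
        eq_singleton_of_mem_miss hlf hconn hc hL1 hz (miss_symm hlf hconn hc hL1 hz ha1m)
      have hma2 : missSet G C a2 = {b2} :=
        eq_singleton_of_mem_miss hlf hconn hc hL1 hz (miss_symm hlf hconn hc hL1 hz ha2m)
      have hp2a : 2 ≤ ({x | C x = C a1} : Set V).ncard := by
        have := (Set.one_lt_ncard_iff (side_fin hlf hconn hc hL1 hz (C a1))).mpr
          ⟨a1, a2, rfl, hca2, ha12⟩
        omega
      have hp2b : 2 ≤ ({x | C x = C b1} : Set V).ncard := by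
        have := (Set.one_lt_ncard_iff (side_fin hlf hconn hc hL1 hz (C b1))).mpr
          ⟨b1, b2, rfl, hbc.symm, hb12⟩
        omega
      by_cases hU1 : ∃ u : V, C u = C b1 ∧ missSet G C u = ∅
      · obtain ⟨u1, hu1c, hu1m⟩ := hU1
        by_cases hU2 : ∃ u : V, C u = C a1 ∧ missSet G C u = ∅
        · obtain ⟨u2, hu2c, hu2m⟩ := hU2
          have t1 := two_matched_le hlf hconn hc hL1 hz hb1m hb2m hb12 hbc hu1c hu1m
          have t2 := two_matched_le hlf hconn hc hL1 hz hma1 hma2 ha12 hca2.symm hu2c hu2m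
          omega
        · push_neg at hU2
          exact (allmatched_contra hlf hconn hc hL1 hz hca1.symm
            (fun x hx => (hU2 x hx).ne_empty) hu1c hu1m hp2a).elim
      · push_neg at hU1
        by_cases hU2 : ∃ u : V, C u = C a1 ∧ missSet G C u = ∅
        · obtain ⟨u2, hu2c, hu2m⟩ := hU2
          exact (allmatched_contra hlf hconn hc hL1 hz hca1
            (fun x hx => (hU1 x hx).ne_empty) hu2c hu2m hp2b).elim
        · push_neg at hU2
          have hallm : ∀ x : V, missSet G C x ≠ ∅ := by
            intro x
            by_cases hcx : C x = C b1
            · exact (hU1 x hcx).ne_empty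
            · exact (hU2 x (fin2_eq_of_ne hca1 hcx)).ne_empty
          exact Or.inr (Or.inr (Or.inr ⟨({x | C x = (0 : Fin 2)} : Set V).ncard,
            iso_matching hlf hconn hc hL1 hz h10 hallm rfl⟩))
end
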